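/- arXiv:2208.13652 — 6 statements merged into one kernel-verified Lean document; each statement's English description precedes it below -/
import Mathlib

section
/- Let S = {s_1 < ⋯ < s_{k_1}} and T = {t_1 < ⋯ < t_{k_2}} be nonempty subsets of {1, …, n−1} with n ≥ max S + max T. Let m ∈ {1, …, n} and let a_1, …, a_{k_1}, b_1, …, b_{k_2} be nonnegative integers, not all zero, satisfying 1 ≤ m + Σ_{i=1}^{k_1} a_i s_i − Σ_{j=1}^{k_2} b_j t_j ≤ n. Then there exists a finite sequence c_1, …, c_N of integers with N = Σ_{i=1}^{k_1} a_i + Σ_{j=1}^{k_2} b_j such that: for each i ∈ {1,…,k_1}, exactly a_i of the terms equal s_i; for each j ∈ {1,…,k_2}, exactly b_j of the terms equal −t_j; and every partial sum c_1 + ⋯ + c_k (1 ≤ k ≤ N) lies between 1 − m and n − m. -/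
open scoped Classical in
noncomputable def pickGreedy (n p : ℤ) (M : Multiset ℤ) (h : M ≠ 0) : ℤ :=
  if h2 : ∃ x ∈ M, 0 < x ∧ p + x ≤ n then h2.choose
  else if h3 : ∃ x ∈ M, x < 0 then h3.choose
  else (Multiset.exists_mem_of_ne_zero h).choose

lemma pickGreedy_mem (n p : ℤ) (M : Multiset ℤ) (h : M ≠ 0) : pickGreedy n p M h ∈ M := by
  unfold pickGreedy
  split_ifs with h2 h3
  · exact h2.choose_spec.1
  · exact h3.choose_spec.1
  · exact (Multiset.exists_mem_of_ne_zero h).choose_spec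

noncomputable def greedy (n p : ℤ) (M : Multiset ℤ) : List ℤ :=
  if h : M = 0 then []
  else pickGreedy n p M h :: greedy n (p + pickGreedy n p M h) (M.erase (pickGreedy n p M h))
termination_by M.card
decreasing_by exact Multiset.card_erase_lt_of_mem (pickGreedy_mem n p M h)

lemma greedy_coe (n : ℤ) (M : Multiset ℤ) : ∀ p, ((greedy n p M : List ℤ) : Multiset ℤ) = M := by
  induction M using Multiset.strongInductionOn with
  | _ M ih =>
    intro p
    by_cases h : M = 0
    · subst h; rw [greedy]; simp
    · rw [greedy]
      simp only [h, dite_false, ← Multiset.cons_coe]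
      rw [ih _ (Multiset.erase_lt.2 (pickGreedy_mem n p M h))]
      exact Multiset.cons_erase (pickGreedy_mem n p M h)

lemma multiset_sum_nonpos {M : Multiset ℤ} (h : ∀ x ∈ M, x ≤ 0) : M.sum ≤ 0 := by
  induction M using Multiset.induction_on with
  | empty => simp
  | cons a M ih =>
    rw [Multiset.sum_cons]
    have := h a (Multiset.mem_cons_self a M)
    have := ih fun x hx => h x (Multiset.mem_cons_of_mem hx)
    linarith

lemma multiset_sum_nonneg' {M : Multiset ℤ} (h : ∀ x ∈ M, 0 ≤ x) : 0 ≤ M.sum := by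
  induction M using Multiset.induction_on with
  | empty => simp
  | cons a M ih =>
    rw [Multiset.sum_cons]
    have := h a (Multiset.mem_cons_self a M)
    have := ih fun x hx => h x (Multiset.mem_cons_of_mem hx)
    linarith

lemma pickGreedy_bound (n p : ℤ) (M : Multiset ℤ) (h : M ≠ 0)
    (hnz : ∀ x ∈ M, x ≠ 0)
    (hpair : ∀ x ∈ M, ∀ y ∈ M, 0 < x → y < 0 → x - y ≤ n)
    (hp1 : 1 ≤ p) (hpn : p ≤ n) (hs1 : 1 ≤ p + M.sum) (hsn : p + M.sum ≤ n) :
    1 ≤ p + pickGreedy n p M h ∧ p + pickGreedy n p M h ≤ n := by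
  unfold pickGreedy
  split_ifs with h2 h3
  · obtain ⟨hmem, hpos, hle⟩ := h2.choose_spec
    exact ⟨by linarith, hle⟩
  · obtain ⟨hmem, hneg⟩ := h3.choose_spec
    refine ⟨?_, by linarith⟩
    by_cases hpos : ∃ y ∈ M, 0 < y
    · obtain ⟨y, hy, hy0⟩ := hpos
      have h4 : ¬(p + y ≤ n) := fun hc => h2 ⟨y, hy, hy0, hc⟩
      have h5 := hpair y hy _ hmem hy0 hneg
      linarith
    · push_neg at hpos
      have hE : h3.choose ::ₘ M.erase h3.choose = M := Multiset.cons_erase hmem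
      have hsum : h3.choose + (M.erase h3.choose).sum = M.sum := by
        conv_rhs => rw [← hE, Multiset.sum_cons]
      have h6 : (M.erase h3.choose).sum ≤ 0 :=
        multiset_sum_nonpos fun x hx => hpos x (Multiset.mem_of_mem_erase hx)
      linarith
  · push_neg at h3
    set x := (Multiset.exists_mem_of_ne_zero h).choose with hxdef
    have hmem : x ∈ M := (Multiset.exists_mem_of_ne_zero h).choose_spec
    have hxpos : 0 < x := lt_of_le_of_ne (h3 x hmem) (Ne.symm (hnz x hmem))
    have hE : x ::ₘ M.erase x = M := Multiset.cons_erase hmem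
    have hsum : x + (M.erase x).sum = M.sum := by
      conv_rhs => rw [← hE, Multiset.sum_cons]
    have h6 : 0 ≤ (M.erase x).sum :=
      multiset_sum_nonneg' fun y hy => h3 y (Multiset.mem_of_mem_erase hy)
    exact ⟨by linarith, by linarith⟩

lemma greedy_sums (n : ℤ) (M : Multiset ℤ) :
    ∀ p : ℤ, (∀ x ∈ M, x ≠ 0) → (∀ x ∈ M, ∀ y ∈ M, 0 < x → y < 0 → x - y ≤ n) →
    1 ≤ p → p ≤ n → 1 ≤ p + M.sum → p + M.sum ≤ n →
    ∀ k, 1 ≤ p + ((greedy n p M).take k).sum ∧ p + ((greedy n p M).take k).sum ≤ n := by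
  induction M using Multiset.strongInductionOn with
  | _ M ih =>
    intro p hnz hpair hp1 hpn hs1 hsn k
    by_cases h : M = 0
    · subst h; rw [greedy]; simp only [dite_true, List.take_nil, List.sum_nil, add_zero]
      exact ⟨hp1, hpn⟩
    · rw [greedy]
      simp only [h, dite_false]
      cases k with
      | zero => simpa using ⟨hp1, hpn⟩
      | succ k =>
        rw [List.take_succ_cons, List.sum_cons]
        set x := pickGreedy n p M h with hxdef
        have hx : x ∈ M := pickGreedy_mem n p M h
        have hb := pickGreedy_bound n p M h hnz hpair hp1 hpn hs1 hsn
        have hE : x ::ₘ M.erase x = M := Multiset.cons_erase hx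
        have hsum : x + (M.erase x).sum = M.sum := by
          conv_rhs => rw [← hE, Multiset.sum_cons]
        have hlt : M.erase x < M := Multiset.erase_lt.2 hx
        have := ih (M.erase x) hlt (p + x)
          (fun y hy => hnz y (Multiset.mem_of_mem_erase hy))
          (fun y hy z hz => hpair y (Multiset.mem_of_mem_erase hy) z (Multiset.mem_of_mem_erase hz))
          hb.1 hb.2 (by linarith) (by linarith) k
        exact ⟨by linarith [this.1], by linarith [this.2]⟩

lemma sum_range_getD (L : List ℤ) : ∀ k, k ≤ L.length →
    ∑ l ∈ Finset.range k, L.getD l 0 = (L.take k).sum := by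
  intro k hk
  induction k with
  | zero => simp
  | succ k ih =>
    have hk' : k < L.length := hk
    rw [Finset.sum_range_succ, ih hk'.le, List.sum_take_succ L k hk',
      List.getD_eq_getElem L 0 hk']

lemma card_filter_range_getD (L : List ℤ) (v : ℤ) :
    ((Finset.range L.length).filter (fun k => L.getD k 0 = v)).card = L.count v := by
  induction L using List.reverseRecOn with
  | nil => simp
  | append_singleton l x ih =>
    have h1 : (Finset.range l.length).filter (fun k => (l ++ [x]).getD k 0 = v)
        = (Finset.range l.length).filter (fun k => l.getD k 0 = v) := by
      apply Finset.filter_congr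
      intro k hk
      rw [List.getD_append l [x] 0 k (Finset.mem_range.1 hk)]
    rw [List.length_append, List.length_singleton, Finset.range_add_one, Finset.filter_insert]
    have h2 : (l ++ [x]).getD l.length 0 = x := by
      rw [List.getD_eq_getElem _ 0 (by simp)]
      simp
    rw [h2, List.count_append, h1]
    by_cases hv : x = v
    · rw [if_pos hv, Finset.card_insert_of_notMem (by simp), ih]
      simp [hv, List.count_singleton]
    · rw [if_neg hv, ih]
      simp [List.count_singleton, hv]

/-- (Rearrangement lemma.) Let `S = {s_1 < ⋯ < s_{k₁}}` and
`T = {t_1 < ⋯ < t_{k₂}}` be subsets of `{1, …, n−1}` with `n ≥ max S + max T`, let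
`m ∈ {1, …, n}`, and let `a_i, b_j` be nonnegative integers, not all zero, with
`1 ≤ m + Σ a_i s_i − Σ b_j t_j ≤ n`. Then the multiset consisting of `a_i` copies of
`s_i` and `b_j` copies of `−t_j` can be arranged into a sequence all of whose partial
sums lie between `1 − m` and `n − m`. -/
theorem rearrangement_lemma (n k₁ k₂ : ℕ) (hn : 2 ≤ n)
    (s : Fin (k₁ + 1) → ℕ) (t : Fin (k₂ + 1) → ℕ)
    (hs : StrictMono s) (ht : StrictMono t)
    (hsmem : ∀ i, s i ∈ Finset.Icc 1 (n - 1)) (htmem : ∀ j, t j ∈ Finset.Icc 1 (n - 1))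
    (hmax : s (Fin.last k₁) + t (Fin.last k₂) ≤ n)
    (m : ℕ) (hm1 : 1 ≤ m) (hmn : m ≤ n)
    (a : Fin (k₁ + 1) → ℕ) (b : Fin (k₂ + 1) → ℕ)
    (hab : 0 < (∑ i, a i) + (∑ j, b j))
    (hrange1 : 1 ≤ (m : ℤ) + ∑ i, (a i : ℤ) * (s i : ℤ) - ∑ j, (b j : ℤ) * (t j : ℤ))
    (hrange2 : (m : ℤ) + ∑ i, (a i : ℤ) * (s i : ℤ) - ∑ j, (b j : ℤ) * (t j : ℤ) ≤ n) :
    ∃ c : ℕ → ℤ,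
      (∀ k < (∑ i, a i) + (∑ j, b j), (∃ i, c k = (s i : ℤ)) ∨ (∃ j, c k = -(t j : ℤ))) ∧
      (∀ i, ((Finset.range ((∑ i, a i) + (∑ j, b j))).filter
        (fun k => c k = (s i : ℤ))).card = a i) ∧
      (∀ j, ((Finset.range ((∑ i, a i) + (∑ j, b j))).filter
        (fun k => c k = -(t j : ℤ))).card = b j) ∧
      (∀ k : ℕ, 1 ≤ k → k ≤ (∑ i, a i) + (∑ j, b j) →
        1 - (m : ℤ) ≤ ∑ l ∈ Finset.range k, c l ∧
        ∑ l ∈ Finset.range k, c l ≤ (n : ℤ) - (m : ℤ)) := by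
  classical
  set N : ℕ := (∑ i, a i) + (∑ j, b j) with hN
  set M : Multiset ℤ :=
    (∑ i, Multiset.replicate (a i) ((s i : ℤ))) + ∑ j, Multiset.replicate (b j) (-(t j : ℤ))
    with hM
  -- basic bounds on s, t
  have hs1 : ∀ i, (1 : ℤ) ≤ (s i : ℤ) := fun i => by
    exact_mod_cast (Finset.mem_Icc.1 (hsmem i)).1
  have ht1 : ∀ j, (1 : ℤ) ≤ (t j : ℤ) := fun j => by
    exact_mod_cast (Finset.mem_Icc.1 (htmem j)).1
  have hst : ∀ i j, (s i : ℤ) + (t j : ℤ) ≤ (n : ℤ) := fun i j => by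
    have : s i + t j ≤ n :=
      le_trans (add_le_add (hs.monotone (Fin.le_last i)) (ht.monotone (Fin.le_last j))) hmax
    exact_mod_cast this
  -- membership characterization
  have hmemM : ∀ x ∈ M, (∃ i, x = (s i : ℤ)) ∨ (∃ j, x = -(t j : ℤ)) := by
    intro x hx
    rw [hM, Multiset.mem_add] at hx
    rcases hx with hx | hx
    · rw [Multiset.mem_sum] at hx
      obtain ⟨i, -, hi⟩ := hx
      exact Or.inl ⟨i, (Multiset.eq_of_mem_replicate hi)⟩
    · rw [Multiset.mem_sum] at hx
      obtain ⟨j, -, hj⟩ := hx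
      exact Or.inr ⟨j, (Multiset.eq_of_mem_replicate hj)⟩
  -- homs for card and sum
  have hcard : Multiset.card M = N := by
    have h1 : Multiset.card (∑ i, Multiset.replicate (a i) ((s i : ℤ))) = ∑ i, a i :=
      (map_sum (⟨⟨Multiset.card, Multiset.card_zero⟩, Multiset.card_add⟩ :
        Multiset ℤ →+ ℕ) _ Finset.univ).trans (by simp)
    have h2 : Multiset.card (∑ j, Multiset.replicate (b j) (-(t j : ℤ))) = ∑ j, b j :=
      (map_sum (⟨⟨Multiset.card, Multiset.card_zero⟩, Multiset.card_add⟩ :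
        Multiset ℤ →+ ℕ) _ Finset.univ).trans (by simp)
    rw [hM, Multiset.card_add, h1, h2]
  have hsumM : M.sum = (∑ i, (a i : ℤ) * (s i : ℤ)) - ∑ j, (b j : ℤ) * (t j : ℤ) := by
    have h1 : (∑ i, Multiset.replicate (a i) ((s i : ℤ))).sum = ∑ i, (a i : ℤ) * (s i : ℤ) :=
      (map_sum (⟨⟨Multiset.sum, Multiset.sum_zero⟩, Multiset.sum_add⟩ :
        Multiset ℤ →+ ℤ) _ Finset.univ).trans (by
          simp [Multiset.sum_replicate, nsmul_eq_mul])
    have h2 : (∑ j, Multiset.replicate (b j) (-(t j : ℤ))).sum = -∑ j, (b j : ℤ) * (t j : ℤ) :=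
      (map_sum (⟨⟨Multiset.sum, Multiset.sum_zero⟩, Multiset.sum_add⟩ :
        Multiset ℤ →+ ℤ) _ Finset.univ).trans (by
          simp [Multiset.sum_replicate, nsmul_eq_mul, Finset.sum_neg_distrib, mul_comm])
    rw [hM, Multiset.sum_add, h1, h2]
    ring
  -- invariant hypotheses
  have hnz : ∀ x ∈ M, x ≠ 0 := by
    intro x hx
    rcases hmemM x hx with ⟨i, rfl⟩ | ⟨j, rfl⟩
    · have := hs1 i; intro hc; rw [hc] at this; norm_num at this
    · have := ht1 j; intro hc; linarith
  have hpair : ∀ x ∈ M, ∀ y ∈ M, 0 < x → y < 0 → x - y ≤ (n : ℤ) := by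
    intro x hx y hy hx0 hy0
    rcases hmemM x hx with ⟨i, rfl⟩ | ⟨j, rfl⟩
    · rcases hmemM y hy with ⟨i', rfl⟩ | ⟨j', rfl⟩
      · have := hs1 i'; linarith
      · have := hst i j'; linarith
    · have := ht1 j; linarith
  -- counts
  have hcount_s : ∀ i, Multiset.count ((s i : ℤ)) M = a i := by
    intro i
    rw [hM, Multiset.count_add, Multiset.count_sum', Multiset.count_sum']
    have h1 : ∑ i', Multiset.count ((s i : ℤ)) (Multiset.replicate (a i') ((s i' : ℤ))) = a i := by
      rw [Finset.sum_congr rfl (fun i' _ => Multiset.count_replicate _ _ _)]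
      have heq : ∀ i' : Fin (k₁ + 1), (((s i' : ℤ)) = (s i : ℤ)) ↔ i' = i := fun i' =>
        ⟨fun h => hs.injective (Nat.cast_injective h), fun h => by rw [h]⟩
      simp only [heq]
      simp
    have h2 : ∑ j, Multiset.count ((s i : ℤ)) (Multiset.replicate (b j) (-(t j : ℤ))) = 0 := by
      apply Finset.sum_eq_zero
      intro j _
      rw [Multiset.count_replicate, if_neg]
      intro hc
      have := hs1 i; have := ht1 j; linarith
    rw [h1, h2]
    simp
  have hcount_t : ∀ j, Multiset.count (-(t j : ℤ)) M = b j := by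
    intro j
    rw [hM, Multiset.count_add, Multiset.count_sum', Multiset.count_sum']
    have h1 : ∑ i, Multiset.count (-(t j : ℤ)) (Multiset.replicate (a i) ((s i : ℤ))) = 0 := by
      apply Finset.sum_eq_zero
      intro i _
      rw [Multiset.count_replicate, if_neg]
      intro hc
      have := hs1 i; have := ht1 j; linarith
    have h2 : ∑ j', Multiset.count (-(t j : ℤ)) (Multiset.replicate (b j') (-(t j' : ℤ))) = b j := by
      rw [Finset.sum_congr rfl (fun j' _ => Multiset.count_replicate _ _ _)]
      have heq : ∀ j' : Fin (k₂ + 1), ((-(t j' : ℤ)) = -(t j : ℤ)) ↔ j' = j := fun j' =>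
        ⟨fun h => ht.injective (Nat.cast_injective (neg_injective h)), fun h => by rw [h]⟩
      simp only [heq]
      simp
    rw [h1, h2]
    simp
  -- the greedy list
  set L : List ℤ := greedy (n : ℤ) (m : ℤ) M with hL
  have hcoe : (L : Multiset ℤ) = M := greedy_coe (n : ℤ) M (m : ℤ)
  have hlen : L.length = N := by
    have : Multiset.card (L : Multiset ℤ) = L.length := Multiset.coe_card L
    rw [hcoe, hcard] at this
    omega
  refine ⟨fun k => L.getD k 0, ?_, ?_, ?_, ?_⟩
  · intro k hk
    have hk' : k < L.length := by omega
    have hmem : L.getD k 0 ∈ L := by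
      rw [List.getD_eq_getElem L 0 hk']
      exact List.getElem_mem hk'
    have : L.getD k 0 ∈ M := by rw [← hcoe]; exact_mod_cast hmem
    rcases hmemM _ this with ⟨i, h⟩ | ⟨j, h⟩
    · exact Or.inl ⟨i, h⟩
    · exact Or.inr ⟨j, h⟩
  · intro i
    rw [← hlen, card_filter_range_getD]
    have := Multiset.coe_count ((s i : ℤ)) L
    rw [hcoe] at this
    rw [← this, hcount_s]
  · intro j
    rw [← hlen, card_filter_range_getD]
    have := Multiset.coe_count (-(t j : ℤ)) L
    rw [hcoe] at this
    rw [← this, hcount_t]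
  · intro k hk1 hkN
    have hkL : k ≤ L.length := by omega
    rw [sum_range_getD L k hkL]
    have hmn' : (m : ℤ) ≤ (n : ℤ) := by exact_mod_cast hmn
    have hm1' : (1 : ℤ) ≤ (m : ℤ) := by exact_mod_cast hm1
    have := greedy_sums (n : ℤ) M (m : ℤ) hnz hpair hm1' hmn'
      (by rw [hsumM]; linarith) (by rw [hsumM]; linarith) k
    exact ⟨by linarith [this.1], by linarith [this.2]⟩
end

section
/- Let D be the Toeplitz digraph of T_n⟨S;T⟩ with S = {s_1 < ⋯ < s_{k_1}}, T = {t_1 < ⋯ < t_{k_2}}, max S + min T ≤ n and min S + max T ≤ n. Then for every vertex v of D and all nonnegative integers a_2, …, a_{k_1}, b_2, …, b_{k_2}, there exist a nonnegative integer ℓ and a directed walk of length ℓ in D starting at v that contains exactly a_i s_i-arcs for each 2 ≤ i ≤ k_1 and exactly b_j t_j-arcs for each 2 ≤ j ≤ k_2, where ℓ ≤ (a_2 + ⋯ + a_{k_1} + b_2 + ⋯ + b_{k_2})·(max{⌈t_{k_2}/s_1⌉, ⌈s_{k_1}/t_1⌉} + 1). -/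
/-- The Toeplitz digraph of `T_n⟨S;T⟩`: vertices are integers in `[1, n]`, and
there is an arc `(u, v)` iff `v − u ∈ S` or `u − v ∈ T`. -/
def ToepArc (n : ℕ) (S T : Finset ℕ) (u v : ℤ) : Prop :=
  u ∈ Finset.Icc (1 : ℤ) (n : ℤ) ∧ v ∈ Finset.Icc (1 : ℤ) (n : ℤ) ∧
    ((∃ s ∈ S, v = u + (s : ℤ)) ∨ (∃ t ∈ T, v = u - (t : ℤ)))

/-- The number of steps of the walk `w 0, w 1, …, w ℓ` whose difference
`w (k+1) − w k` equals `x`.  Taking `x = s_i` counts the `s_i`-arcs of the walk;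
taking `x = −t_j` counts its `t_j`-arcs. -/
def ArcCount (w : ℕ → ℤ) (ℓ : ℕ) (x : ℤ) : ℕ :=
  ((Finset.range ℓ).filter (fun k => w (k + 1) - w k = x)).card

def ValidFrom (n : ℕ) (S T : Finset ℕ) : ℤ → List ℤ → Prop
  | p, [] => p ∈ Finset.Icc (1 : ℤ) (n : ℤ)
  | p, d :: L => ToepArc n S T p (p + d) ∧ ValidFrom n S T (p + d) L

theorem ValidFrom.end {n S T} : ∀ {p L}, ValidFrom n S T p L → p + L.sum ∈ Finset.Icc (1 : ℤ) (n : ℤ)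
  | p, [], h => by rw [List.sum_nil, add_zero]; exact h
  | p, d :: L, h => by
    have := ValidFrom.end h.2
    rw [List.sum_cons]; rw [← add_assoc]; exact this

theorem ValidFrom.append {n S T} : ∀ {p : ℤ} {L₁ L₂ : List ℤ}, ValidFrom n S T p L₁ →
    ValidFrom n S T (p + L₁.sum) L₂ → ValidFrom n S T p (L₁ ++ L₂)
  | p, [], L₂, _, h₂ => by simpa using h₂
  | p, d :: L₁, L₂, h₁, h₂ => by
    refine ⟨h₁.1, ValidFrom.append h₁.2 ?_⟩
    rw [List.sum_cons, ← add_assoc] at h₂; exact h₂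

theorem ValidFrom.arcs {n S T} : ∀ {p : ℤ} {L : List ℤ}, ValidFrom n S T p L →
    ∀ k < L.length, ToepArc n S T (p + (L.take k).sum) (p + (L.take (k + 1)).sum)
  | p, [], _, k, hk => by simp at hk
  | p, d :: L, h, 0, hk => by simpa using h.1
  | p, d :: L, h, k + 1, hk => by
    have := ValidFrom.arcs h.2 k (by simpa using hk)
    simpa [List.take_cons, add_assoc] using this

theorem count_eq_arcCount (x : ℤ) : ∀ (L : List ℤ) (p : ℤ),
    ArcCount (fun k => p + (L.take k).sum) L.length x = L.count x
  | [], p => by simp [ArcCount]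
  | d :: L, p => by
    have ih := count_eq_arcCount x L (p + d)
    unfold ArcCount at *
    rw [Finset.card_filter] at *
    rw [List.length_cons, Finset.sum_range_succ']
    rw [List.count_cons]
    have h0 : ∀ k : ℕ, (p + ((d :: L).take (k + 1 + 1)).sum) - (p + ((d :: L).take (k + 1)).sum)
        = (p + d + (L.take (k + 1)).sum) - (p + d + (L.take k).sum) := by
      intro k; simp [List.take_cons, add_assoc]
    simp only [h0]
    rw [ih]
    have h1 : (p + ((d :: L).take (0 + 1)).sum) - (p + ((d :: L).take 0).sum) = d := by simp
    rw [h1]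
    rcases eq_or_ne d x with h | h <;> simp [h]

theorem valid_replicate_down {n : ℕ} {S T : Finset ℕ} {c : ℕ} (hc : c ∈ T) :
    ∀ (q : ℕ) (p : ℤ), 1 + (q * c : ℕ) ≤ p → p ≤ n →
      ValidFrom n S T p (List.replicate q (-(c : ℤ)))
  | 0, p, h1, h2 => by
    show p ∈ Finset.Icc (1 : ℤ) (n : ℤ)
    simp only [Nat.cast_mul] at h1
    rw [Finset.mem_Icc]; constructor <;> omega
  | q + 1, p, h1, h2 => by
    simp only [Nat.cast_mul, Nat.cast_add, Nat.cast_one] at h1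
    rw [List.replicate_succ]
    refine ⟨⟨?_, ?_, Or.inr ⟨c, hc, by ring⟩⟩, ?_⟩
    · rw [Finset.mem_Icc]; constructor <;> nlinarith [Int.natCast_nonneg q, Int.natCast_nonneg c]
    · rw [Finset.mem_Icc]; constructor <;> nlinarith [Int.natCast_nonneg q, Int.natCast_nonneg c]
    · apply valid_replicate_down hc q
      · simp only [Nat.cast_mul]; nlinarith
      · nlinarith [Int.natCast_nonneg c]

theorem valid_replicate_up {n : ℕ} {S T : Finset ℕ} {c : ℕ} (hc : c ∈ S) :
    ∀ (q : ℕ) (p : ℤ), 1 ≤ p → p + (q * c : ℕ) ≤ n →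
      ValidFrom n S T p (List.replicate q ((c : ℤ)))
  | 0, p, h1, h2 => by
    show p ∈ Finset.Icc (1 : ℤ) (n : ℤ)
    simp only [Nat.cast_mul] at h2
    rw [Finset.mem_Icc]; constructor <;> omega
  | q + 1, p, h1, h2 => by
    simp only [Nat.cast_mul, Nat.cast_add, Nat.cast_one] at h2
    rw [List.replicate_succ]
    refine ⟨⟨?_, ?_, Or.inl ⟨c, hc, by ring⟩⟩, ?_⟩
    · rw [Finset.mem_Icc]; constructor <;> nlinarith [Int.natCast_nonneg q, Int.natCast_nonneg c]
    · rw [Finset.mem_Icc]; constructor <;> nlinarith [Int.natCast_nonneg q, Int.natCast_nonneg c]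
    · apply valid_replicate_up hc q
      · nlinarith [Int.natCast_nonneg c]
      · simp only [Nat.cast_mul]; nlinarith

theorem gadget_s {n : ℕ} {S T : Finset ℕ} {si t0 : ℕ}
    (hsi : si ∈ S) (ht0 : t0 ∈ T) (hsi1 : 1 ≤ si) (ht01 : 1 ≤ t0)
    (hsum : si + t0 ≤ n) {p : ℤ} (hp : p ∈ Finset.Icc (1 : ℤ) (n : ℤ)) :
    ∃ L : List ℤ, ValidFrom n S T p L ∧ L.count ((si : ℤ)) = 1 ∧
      (∀ x : ℤ, x ≠ (si : ℤ) → x ≠ -(t0 : ℤ) → L.count x = 0) ∧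
      L.length ≤ si ⌈/⌉ t0 + 1 := by
  rw [Finset.mem_Icc] at hp
  obtain ⟨hp1, hp2⟩ := hp
  set c : ℕ := (p + si - n).toNat with hc
  set q : ℕ := c ⌈/⌉ t0 with hqdef
  have ht0pos : 0 < t0 := ht01
  have h1 : c ≤ t0 * q := by
    have := le_smul_ceilDiv (b := c) ht0pos
    simpa [smul_eq_mul] using this
  have h2 : q * t0 ≤ c + t0 - 1 := by
    rw [hqdef, Nat.ceilDiv_eq_add_pred_div]
    exact Nat.div_mul_le_self _ _
  have hqle : q ≤ si ⌈/⌉ t0 := by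
    rw [hqdef]
    rw [ceilDiv_le_iff_le_mul ht0pos]
    have h3 : si ≤ t0 * (si ⌈/⌉ t0) := by
      have := le_smul_ceilDiv (b := si) ht0pos
      simpa [smul_eq_mul] using this
    have h4 : c ≤ si := by omega
    omega
  -- key int inequalities
  have hA : p + (si : ℤ) - n ≤ (q : ℤ) * t0 := by
    have h1' : c ≤ q * t0 := by rw [Nat.mul_comm]; exact h1
    have : (c : ℤ) ≤ (q : ℤ) * t0 := by exact_mod_cast h1'
    omega
  have hB : (q : ℤ) * t0 ≤ p - 1 := by
    by_cases hc0 : c = 0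
    · have : q = 0 := by rw [hqdef, hc0]; simp
      rw [this]; omega
    · have : (q : ℤ) * t0 ≤ (c : ℤ) + t0 - 1 := by
        have : ((q * t0 : ℕ) : ℤ) ≤ ((c + t0 - 1 : ℕ) : ℤ) := by exact_mod_cast h2
        omega
      omega
  refine ⟨List.replicate q (-(t0 : ℤ)) ++ [(si : ℤ)], ?_, ?_, ?_, ?_⟩
  · apply ValidFrom.append
    · apply valid_replicate_down ht0 q p ?_ hp2
      push_cast; omega
    · rw [List.sum_replicate, smul_neg, nsmul_eq_mul]
      show _ ∧ _
      refine ⟨⟨?_, ?_, Or.inl ⟨si, hsi, by ring⟩⟩, ?_⟩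
      · rw [Finset.mem_Icc]; omega
      · rw [Finset.mem_Icc]; constructor <;> omega
      · show _ ∈ Finset.Icc _ _
        rw [Finset.mem_Icc]; constructor <;> omega
  · rw [List.count_append, List.count_replicate]
    have : ((si : ℤ)) ≠ -(t0 : ℤ) := by omega
    simp [this, Ne.symm this]
  · intro x hx1 hx2
    rw [List.count_append, List.count_replicate]
    simp [hx1, hx2, Ne.symm hx2, Ne.symm hx1, List.count_singleton]
  · rw [List.length_append, List.length_replicate, List.length_singleton]
    omega

theorem gadget_t {n : ℕ} {S T : Finset ℕ} {tj s0 : ℕ}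
    (htj : tj ∈ T) (hs0 : s0 ∈ S) (htj1 : 1 ≤ tj) (hs01 : 1 ≤ s0)
    (hsum : s0 + tj ≤ n) {p : ℤ} (hp : p ∈ Finset.Icc (1 : ℤ) (n : ℤ)) :
    ∃ L : List ℤ, ValidFrom n S T p L ∧ L.count (-(tj : ℤ)) = 1 ∧
      (∀ x : ℤ, x ≠ -(tj : ℤ) → x ≠ (s0 : ℤ) → L.count x = 0) ∧
      L.length ≤ tj ⌈/⌉ s0 + 1 := by
  rw [Finset.mem_Icc] at hp
  obtain ⟨hp1, hp2⟩ := hp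
  set c : ℕ := ((tj : ℤ) + 1 - p).toNat with hc
  set q : ℕ := c ⌈/⌉ s0 with hqdef
  have hs0pos : 0 < s0 := hs01
  have h1 : c ≤ s0 * q := by
    have := le_smul_ceilDiv (b := c) hs0pos
    simpa [smul_eq_mul] using this
  have h2 : q * s0 ≤ c + s0 - 1 := by
    rw [hqdef, Nat.ceilDiv_eq_add_pred_div]
    exact Nat.div_mul_le_self _ _
  have hqle : q ≤ tj ⌈/⌉ s0 := by
    rw [hqdef, ceilDiv_le_iff_le_mul hs0pos]
    have h3 : tj ≤ s0 * (tj ⌈/⌉ s0) := by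
      have := le_smul_ceilDiv (b := tj) hs0pos
      simpa [smul_eq_mul] using this
    have h4 : c ≤ tj := by omega
    omega
  have hA : (tj : ℤ) + 1 - p ≤ (q : ℤ) * s0 := by
    have h1' : c ≤ q * s0 := by rw [Nat.mul_comm]; exact h1
    have : (c : ℤ) ≤ (q : ℤ) * s0 := by exact_mod_cast h1'
    omega
  have hB : (q : ℤ) * s0 ≤ (n : ℤ) - p := by
    by_cases hc0 : c = 0
    · have : q = 0 := by rw [hqdef, hc0]; simp
      rw [this]; omega
    · have : (q : ℤ) * s0 ≤ (c : ℤ) + s0 - 1 := by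
        have : ((q * s0 : ℕ) : ℤ) ≤ ((c + s0 - 1 : ℕ) : ℤ) := by exact_mod_cast h2
        omega
      omega
  refine ⟨List.replicate q ((s0 : ℤ)) ++ [-(tj : ℤ)], ?_, ?_, ?_, ?_⟩
  · apply ValidFrom.append
    · apply valid_replicate_up hs0 q p hp1
      push_cast; omega
    · rw [List.sum_replicate, nsmul_eq_mul]
      show _ ∧ _
      refine ⟨⟨?_, ?_, Or.inr ⟨tj, htj, by ring⟩⟩, ?_⟩
      · rw [Finset.mem_Icc]; constructor <;> omega
      · rw [Finset.mem_Icc]; constructor <;> omega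
      · show _ ∈ Finset.Icc _ _
        rw [Finset.mem_Icc]; constructor <;> omega
  · rw [List.count_append, List.count_replicate]
    have : (-(tj : ℤ)) ≠ (s0 : ℤ) := by omega
    simp [this, Ne.symm this]
  · intro x hx1 hx2
    rw [List.count_append, List.count_replicate]
    simp [hx1, hx2, Ne.symm hx2, Ne.symm hx1, List.count_singleton]
  · rw [List.length_append, List.length_replicate, List.length_singleton]
    omega

theorem myCeilDiv_le_ceilDiv {a a' b : ℕ} (h : a ≤ a') : a ⌈/⌉ b ≤ a' ⌈/⌉ b := by
  rcases Nat.eq_zero_or_pos b with hb | hb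
  · subst hb; simp [Nat.ceilDiv_eq_add_pred_div]
  · rw [ceilDiv_le_iff_le_mul hb]
    have := le_smul_ceilDiv (b := a') hb
    rw [smul_eq_mul] at *
    omega

theorem main_walk (n k₁ k₂ : ℕ)
    (s : Fin (k₁ + 1) → ℕ) (t : Fin (k₂ + 1) → ℕ)
    (hs : StrictMono s) (ht : StrictMono t)
    (hsmem : ∀ i, s i ∈ Finset.Icc 1 (n - 1)) (htmem : ∀ j, t j ∈ Finset.Icc 1 (n - 1))
    (hST1 : s (Fin.last k₁) + t 0 ≤ n) (hST2 : s 0 + t (Fin.last k₂) ≤ n) :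
    ∀ (A : ℕ) (a : Fin (k₁ + 1) → ℕ) (b : Fin (k₂ + 1) → ℕ),
    (∑ i ∈ Finset.univ.filter (fun i : Fin (k₁ + 1) => i ≠ 0), a i) +
      (∑ j ∈ Finset.univ.filter (fun j : Fin (k₂ + 1) => j ≠ 0), b j) = A →
    ∀ p ∈ Finset.Icc (1 : ℤ) (n : ℤ), ∃ L : List ℤ,
      ValidFrom n (Finset.image s Finset.univ) (Finset.image t Finset.univ) p L ∧
      (∀ i : Fin (k₁ + 1), i ≠ 0 → L.count ((s i : ℤ)) = a i) ∧
      (∀ j : Fin (k₂ + 1), j ≠ 0 → L.count (-(t j : ℤ)) = b j) ∧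
      L.length ≤ A * (max (t (Fin.last k₂) ⌈/⌉ s 0) (s (Fin.last k₁) ⌈/⌉ t 0) + 1) := by
  have hs1 : ∀ i, 1 ≤ s i := fun i => (Finset.mem_Icc.1 (hsmem i)).1
  have ht1 : ∀ j, 1 ≤ t j := fun j => (Finset.mem_Icc.1 (htmem j)).1
  intro A
  induction A with
  | zero =>
    intro a b hsum p hp
    refine ⟨[], hp, ?_, ?_, by simp⟩
    · intro i hi
      simp only [List.count_nil]
      have := Finset.sum_eq_zero_iff.1 (by omega :
        (∑ i ∈ Finset.univ.filter (fun i : Fin (k₁ + 1) => i ≠ 0), a i) = 0) i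
        (Finset.mem_filter.2 ⟨Finset.mem_univ i, hi⟩)
      omega
    · intro j hj
      simp only [List.count_nil]
      have := Finset.sum_eq_zero_iff.1 (by omega :
        (∑ j ∈ Finset.univ.filter (fun j : Fin (k₂ + 1) => j ≠ 0), b j) = 0) j
        (Finset.mem_filter.2 ⟨Finset.mem_univ j, hj⟩)
      omega
  | succ A ih =>
    intro a b hsum p hp
    by_cases hSa : (∑ i ∈ Finset.univ.filter (fun i : Fin (k₁ + 1) => i ≠ 0), a i) = 0
    · -- use a t-gadget
      have hSb : (∑ j ∈ Finset.univ.filter (fun j : Fin (k₂ + 1) => j ≠ 0), b j) ≠ 0 := by omega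
      obtain ⟨j, hjmem, hbj⟩ := Finset.exists_ne_zero_of_sum_ne_zero hSb
      have hj : j ≠ 0 := (Finset.mem_filter.1 hjmem).2
      have htjle : t j + s 0 ≤ n := by
        have := ht.monotone (Fin.le_last j); omega
      obtain ⟨L₁, hL₁, hc1, hc0, hlen₁⟩ := gadget_t (tj := t j) (s0 := s 0)
        (Finset.mem_image_of_mem t (Finset.mem_univ j))
        (Finset.mem_image_of_mem s (Finset.mem_univ 0))
        (ht1 j) (hs1 0) (by omega) hp
      set b' := Function.update b j (b j - 1) with hb'
      have hsum' : (∑ i ∈ Finset.univ.filter (fun i : Fin (k₁ + 1) => i ≠ 0), a i) +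
          (∑ j' ∈ Finset.univ.filter (fun j' : Fin (k₂ + 1) => j' ≠ 0), b' j') = A := by
        rw [hb', Finset.sum_update_of_mem hjmem]
        rw [Finset.sum_eq_sum_sdiff_singleton_add hjmem b] at hsum
        omega
      obtain ⟨L₂, hL₂, ha₂, hb₂, hlen₂⟩ := ih a b' hsum' _ (ValidFrom.end hL₁)
      refine ⟨L₁ ++ L₂, ValidFrom.append hL₁ hL₂, ?_, ?_, ?_⟩
      · intro i hi
        rw [List.count_append, ha₂ i hi, hc0]
        · omega
        · have h1 := hs1 i
          have h2 := ht1 j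
          omega
        · have hne : s i ≠ s 0 := fun h => hi (hs.injective h)
          omega
      · intro j' hj'
        rcases eq_or_ne j' j with rfl | hne
        · rw [List.count_append, hc1, hb₂ j' hj', hb', Function.update_self]
          omega
        · rw [List.count_append, hb₂ j' hj', hb', Function.update_of_ne hne]
          rw [hc0]
          · omega
          · have : t j' ≠ t j := fun h => hne (ht.injective h)
            omega
          · have := hs1 0; have := ht1 j'
            omega
      · rw [List.length_append]
        have hm : t j ⌈/⌉ s 0 ≤ t (Fin.last k₂) ⌈/⌉ s 0 :=
          myCeilDiv_le_ceilDiv (ht.monotone (Fin.le_last j))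
        have := le_max_left (t (Fin.last k₂) ⌈/⌉ s 0) (s (Fin.last k₁) ⌈/⌉ t 0)
        calc L₁.length + L₂.length
            ≤ (t j ⌈/⌉ s 0 + 1) +
              A * (max (t (Fin.last k₂) ⌈/⌉ s 0) (s (Fin.last k₁) ⌈/⌉ t 0) + 1) := by omega
          _ ≤ (A + 1) * (max (t (Fin.last k₂) ⌈/⌉ s 0) (s (Fin.last k₁) ⌈/⌉ t 0) + 1) := by
              ring_nf; omega
    · -- use an s-gadget
      obtain ⟨i, himem, hai⟩ := Finset.exists_ne_zero_of_sum_ne_zero hSa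
      have hi : i ≠ 0 := (Finset.mem_filter.1 himem).2
      have hsile : s i + t 0 ≤ n := by
        have := hs.monotone (Fin.le_last i); omega
      obtain ⟨L₁, hL₁, hc1, hc0, hlen₁⟩ := gadget_s (si := s i) (t0 := t 0)
        (Finset.mem_image_of_mem s (Finset.mem_univ i))
        (Finset.mem_image_of_mem t (Finset.mem_univ 0))
        (hs1 i) (ht1 0) hsile hp
      set a' := Function.update a i (a i - 1) with ha'
      have hsum' : (∑ i' ∈ Finset.univ.filter (fun i' : Fin (k₁ + 1) => i' ≠ 0), a' i') +
          (∑ j ∈ Finset.univ.filter (fun j : Fin (k₂ + 1) => j ≠ 0), b j) = A := by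
        rw [ha', Finset.sum_update_of_mem himem]
        rw [Finset.sum_eq_sum_sdiff_singleton_add himem a] at hsum
        omega
      obtain ⟨L₂, hL₂, ha₂, hb₂, hlen₂⟩ := ih a' b hsum' _ (ValidFrom.end hL₁)
      refine ⟨L₁ ++ L₂, ValidFrom.append hL₁ hL₂, ?_, ?_, ?_⟩
      · intro i' hi'
        rcases eq_or_ne i' i with rfl | hne
        · rw [List.count_append, hc1, ha₂ i' hi', ha', Function.update_self]
          omega
        · rw [List.count_append, ha₂ i' hi', ha', Function.update_of_ne hne]
          rw [hc0]
          · omega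
          · have : s i' ≠ s i := fun h => hne (hs.injective h)
            omega
          · have := hs1 i'; have := ht1 0
            omega
      · intro j hj
        rw [List.count_append, hb₂ j hj, hc0]
        · omega
        · have := hs1 i; have := ht1 j
          omega
        · have hne : t j ≠ t 0 := fun h => hj (ht.injective h)
          omega
      · rw [List.length_append]
        have hm : s i ⌈/⌉ t 0 ≤ s (Fin.last k₁) ⌈/⌉ t 0 :=
          myCeilDiv_le_ceilDiv (hs.monotone (Fin.le_last i))
        have := le_max_right (t (Fin.last k₂) ⌈/⌉ s 0) (s (Fin.last k₁) ⌈/⌉ t 0)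
        calc L₁.length + L₂.length
            ≤ (s i ⌈/⌉ t 0 + 1) +
              A * (max (t (Fin.last k₂) ⌈/⌉ s 0) (s (Fin.last k₁) ⌈/⌉ t 0) + 1) := by omega
          _ ≤ (A + 1) * (max (t (Fin.last k₂) ⌈/⌉ s 0) (s (Fin.last k₁) ⌈/⌉ t 0) + 1) := by
              ring_nf; omega


/-- For every vertex `v` and prescribed numbers `a_i` (`2 ≤ i ≤ k₁`)
and `b_j` (`2 ≤ j ≤ k₂`), there is a directed walk of some length `ℓ` starting at `v`
containing exactly `a_i` `s_i`-arcs and `b_j` `t_j`-arcs, with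
`ℓ ≤ (Σ a_i + Σ b_j)·(max{⌈t_{k₂}/s_1⌉, ⌈s_{k₁}/t_1⌉} + 1)`. -/
theorem walk_with_prescribed_arcs (n k₁ k₂ : ℕ) (hn : 2 ≤ n)
    (s : Fin (k₁ + 1) → ℕ) (t : Fin (k₂ + 1) → ℕ)
    (hs : StrictMono s) (ht : StrictMono t)
    (hsmem : ∀ i, s i ∈ Finset.Icc 1 (n - 1)) (htmem : ∀ j, t j ∈ Finset.Icc 1 (n - 1))
    (hST1 : s (Fin.last k₁) + t 0 ≤ n) (hST2 : s 0 + t (Fin.last k₂) ≤ n)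
    (v : ℤ) (hv : v ∈ Finset.Icc (1 : ℤ) (n : ℤ))
    (a : Fin (k₁ + 1) → ℕ) (b : Fin (k₂ + 1) → ℕ) :
    ∃ ℓ : ℕ, ∃ w : ℕ → ℤ,
      w 0 = v ∧
      (∀ k < ℓ, ToepArc n (Finset.image s Finset.univ) (Finset.image t Finset.univ)
        (w k) (w (k + 1))) ∧
      (∀ i : Fin (k₁ + 1), i ≠ 0 → ArcCount w ℓ ((s i : ℤ)) = a i) ∧
      (∀ j : Fin (k₂ + 1), j ≠ 0 → ArcCount w ℓ (-(t j : ℤ)) = b j) ∧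
      ℓ ≤ ((∑ i ∈ Finset.univ.filter (fun i : Fin (k₁ + 1) => i ≠ 0), a i) +
            (∑ j ∈ Finset.univ.filter (fun j : Fin (k₂ + 1) => j ≠ 0), b j)) *
          (max (t (Fin.last k₂) ⌈/⌉ s 0) (s (Fin.last k₁) ⌈/⌉ t 0) + 1) := by
  obtain ⟨L, hL, hA, hB, hlen⟩ := main_walk n k₁ k₂ s t hs ht hsmem htmem hST1 hST2
    _ a b rfl v hv
  refine ⟨L.length, fun k => v + (L.take k).sum, by simp, hL.arcs, ?_, ?_, hlen⟩
  · intro i hi; rw [count_eq_arcCount]; exact hA i hi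
  · intro j hj; rw [count_eq_arcCount]; exact hB j hj
end

section
/- Let D be the Toeplitz digraph of T_n⟨S;T⟩ with S = {s_1 < ⋯ < s_{k_1}}, T = {t_1 < ⋯ < t_{k_2}}, max S + min T ≤ n and min S + max T ≤ n. Let v be a vertex of D and let a_1, …, a_{k_1}, b_1, …, b_{k_2} be nonnegative integers such that there exists a directed walk in D starting at v containing exactly a_i s_i-arcs for each 1 ≤ i ≤ k_1 and exactly b_j t_j-arcs for each 1 ≤ j ≤ k_2. If a ≥ a_1 and b ≥ b_1 are nonnegative integers satisfying 1 ≤ v + a·s_1 + Σ_{i=2}^{k_1} a_i s_i − b·t_1 − Σ_{j=2}^{k_2} b_j t_j ≤ n, then there exists a directed walk in D starting at v containing exactly a s_1-arcs, b t_1-arcs, a_i s_i-arcs for each 2 ≤ i ≤ k_1, and b_j t_j-arcs for each 2 ≤ j ≤ k_2. -/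
lemma ArcCount_congr {w w' : ℕ → ℤ} {m : ℕ} (h : ∀ k < m, w (k+1) - w k = w' (k+1) - w' k)
    (x : ℤ) : ArcCount w m x = ArcCount w' m x := by
  unfold ArcCount
  congr 1
  apply Finset.filter_congr
  intro k hk
  rw [h k (Finset.mem_range.mp hk)]

lemma ArcCount_succ (w : ℕ → ℤ) (m : ℕ) (x : ℤ) :
    ArcCount w (m+1) x = ArcCount w m x + (if w (m+1) - w m = x then 1 else 0) := by
  unfold ArcCount
  rw [Finset.range_add_one, Finset.filter_insert]
  split_ifs with h
  · rw [Finset.card_insert_of_notMem (by simp)]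
  · simp

lemma ArcCount_add (w : ℕ → ℤ) (ℓ m : ℕ) (x : ℤ) :
    ArcCount w (ℓ + m) x = ArcCount w ℓ x + ArcCount (fun k => w (ℓ + k)) m x := by
  unfold ArcCount
  rw [Finset.card_filter, Finset.card_filter, Finset.card_filter, Finset.sum_range_add]
  rfl

lemma ArcCount_zero_of (w : ℕ → ℤ) (m : ℕ) (x : ℤ) (h : ∀ k < m, w (k+1) - w k ≠ x) :
    ArcCount w m x = 0 := by
  unfold ArcCount
  rw [Finset.card_eq_zero, Finset.filter_eq_empty_iff]
  intro k hk
  exact h k (Finset.mem_range.mp hk)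

/-- Extend a walk by one more vertex `E` at position `m+1`. -/
lemma exists_extend (w' : ℕ → ℤ) (m : ℕ) (E : ℤ) :
    ∃ w : ℕ → ℤ, (∀ k ≤ m, w k = w' k) ∧ w (m+1) = E ∧
      (∀ x, ArcCount w (m+1) x = ArcCount w' m x + if E - w' m = x then 1 else 0) := by
  refine ⟨fun k => if k ≤ m then w' k else E, fun k hk => if_pos hk, if_neg (by omega), ?_⟩
  intro x
  rw [ArcCount_succ, ArcCount_congr (w' := w') (fun k hk => by
    rw [if_pos (by omega : k ≤ m), if_pos (by omega : k + 1 ≤ m)])]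
  rw [if_neg (by omega : ¬ m + 1 ≤ m), if_pos (le_refl m)]

/-- Appended-walk lemma: zig-zag with steps `+s0` / `-t0` staying in `[1,n]`. -/
lemma aux_walk (n s0 t0 : ℕ) (hs0 : 1 ≤ s0) (ht0 : 1 ≤ t0) (hst : s0 + t0 ≤ n) :
    ∀ m p q : ℕ, p + q = m → ∀ x : ℤ, 1 ≤ x → x ≤ (n:ℤ) →
    1 ≤ x + p * s0 - q * t0 → x + p * s0 - q * t0 ≤ (n:ℤ) →
    ∃ w : ℕ → ℤ, w 0 = x ∧ w m = x + p * s0 - q * t0 ∧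
      (∀ k < m, (1 ≤ w k ∧ w k ≤ (n:ℤ)) ∧ (1 ≤ w (k+1) ∧ w (k+1) ≤ (n:ℤ)) ∧
        (w (k+1) = w k + s0 ∨ w (k+1) = w k - t0)) ∧
      ArcCount w m (s0 : ℤ) = p ∧ ArcCount w m (-(t0 : ℤ)) = q := by
  have hs0' : (1:ℤ) ≤ (s0:ℤ) := by exact_mod_cast hs0
  have ht0' : (1:ℤ) ≤ (t0:ℤ) := by exact_mod_cast ht0
  have hst' : (s0:ℤ) + t0 ≤ n := by exact_mod_cast hst
  intro m
  induction m with
  | zero =>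
    intro p q hpq x hx1 hx2 _ _
    obtain ⟨rfl, rfl⟩ : p = 0 ∧ q = 0 := by omega
    exact ⟨fun _ => x, rfl, by simp, fun k hk => absurd hk (by omega),
      by simp [ArcCount], by simp [ArcCount]⟩
  | succ m ih =>
    intro p q hpq x hx1 hx2 hE1 hE2
    set E : ℤ := x + p * s0 - q * t0 with hE
    by_cases hcase : 0 < p ∧ 1 ≤ E - (s0:ℤ)
    · obtain ⟨hp, hEs⟩ := hcase
      have hE' : x + ((p-1 : ℕ) : ℤ) * s0 - q * t0 = E - s0 := by
        rw [hE]; push_cast [hp]; ring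
      obtain ⟨w', hw0, hwm, harc, hc1, hc2⟩ := ih (p-1) q (by omega) x hx1 hx2
        (by rw [hE']; exact hEs) (by rw [hE']; omega)
      obtain ⟨w, hagree, hlast, hcount⟩ := exists_extend w' m E
      have hwm' : w' m = E - s0 := by rw [hwm, hE']
      have hdiff : E - w' m = s0 := by rw [hwm']; ring
      refine ⟨w, by rw [hagree 0 (by omega), hw0], by rw [hlast, hE], ?_, ?_, ?_⟩
      · intro k hk
        rcases Nat.lt_or_ge k m with hkm | hkm
        · have h1 := hagree k (by omega)
          have h2 := hagree (k+1) (by omega)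
          rw [h1, h2]; exact harc k hkm
        · have hkm' : k = m := by omega
          rw [hkm', hagree m (le_refl m), hlast, hwm']
          exact ⟨⟨by omega, by omega⟩, ⟨hE1, hE2⟩, Or.inl (by ring)⟩
      · rw [hcount, hc1, if_pos hdiff]
        omega
      · rw [hcount, hc2, if_neg (by rw [hdiff]; intro hcon; omega)]
        omega
    · -- take a down-step last
      have hq : 0 < q := by
        rcases Nat.eq_zero_or_pos q with hq0 | hq0
        · exfalso
          subst hq0
          have hp : 0 < p := by omega
          have hps : (s0:ℤ) ≤ (p:ℤ) * s0 :=
            le_mul_of_one_le_left (by omega) (by exact_mod_cast hp)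
          exact hcase ⟨hp, by omega⟩
        · exact hq0
      have hEt : x + p * s0 - ((q-1 : ℕ) : ℤ) * t0 = E + t0 := by
        rw [hE]; push_cast [hq]; ring
      have hEtn : E + (t0:ℤ) ≤ n := by
        by_cases hp : 0 < p
        · have hEs : ¬ (1:ℤ) ≤ E - s0 := fun h => hcase ⟨hp, h⟩
          omega
        · have hp0 : p = 0 := by omega
          have hqt : (t0:ℤ) ≤ (q:ℤ) * t0 :=
            le_mul_of_one_le_left (by omega) (by exact_mod_cast hq)
          have : E = x - q * t0 := by rw [hE, hp0]; push_cast; ring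
          omega
      obtain ⟨w', hw0, hwm, harc, hc1, hc2⟩ := ih p (q-1) (by omega) x hx1 hx2
        (by rw [hEt]; omega) (by rw [hEt]; exact hEtn)
      obtain ⟨w, hagree, hlast, hcount⟩ := exists_extend w' m E
      have hwm' : w' m = E + t0 := by rw [hwm, hEt]
      have hdiff : E - w' m = -(t0:ℤ) := by rw [hwm']; ring
      refine ⟨w, by rw [hagree 0 (by omega), hw0], by rw [hlast, hE], ?_, ?_, ?_⟩
      · intro k hk
        rcases Nat.lt_or_ge k m with hkm | hkm
        · have h1 := hagree k (by omega)
          have h2 := hagree (k+1) (by omega)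
          rw [h1, h2]; exact harc k hkm
        · have hkm' : k = m := by omega
          rw [hkm', hagree m (le_refl m), hlast, hwm']
          exact ⟨⟨by omega, hEtn⟩, ⟨hE1, hE2⟩, Or.inr (by ring)⟩
      · rw [hcount, hc1, if_neg (by rw [hdiff]; intro hcon; omega)]
        omega
      · rw [hcount, hc2, if_pos hdiff]
        omega

lemma sum_split {k : ℕ} (f : Fin (k+1) → ℤ) :
    ∑ i, f i = f 0 + ∑ i ∈ Finset.univ.filter (fun i => i ≠ 0), f i := by
  rw [← Finset.sum_filter_add_sum_filter_not Finset.univ (fun i => i ≠ 0) f]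
  have h : Finset.univ.filter (fun i : Fin (k+1) => ¬ i ≠ 0) = {0} := by
    ext i; simp
  rw [h, Finset.sum_singleton, add_comm]

/-- Suppose there is a directed walk starting at `v` with exactly
`a_i` `s_i`-arcs and `b_j` `t_j`-arcs (`1 ≤ i ≤ k₁`, `1 ≤ j ≤ k₂`).  If `a ≥ a_1` and
`b ≥ b_1` satisfy `1 ≤ v + a·s_1 + Σ_{i≥2} a_i s_i − b·t_1 − Σ_{j≥2} b_j t_j ≤ n`,
then there is a directed walk starting at `v` with exactly `a` `s_1`-arcs, `b`
`t_1`-arcs, and `a_i` `s_i`-arcs, `b_j` `t_j`-arcs for `i, j ≥ 2`. -/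
theorem walk_extension (n k₁ k₂ : ℕ) (hn : 2 ≤ n)
    (s : Fin (k₁ + 1) → ℕ) (t : Fin (k₂ + 1) → ℕ)
    (hs : StrictMono s) (ht : StrictMono t)
    (hsmem : ∀ i, s i ∈ Finset.Icc 1 (n - 1)) (htmem : ∀ j, t j ∈ Finset.Icc 1 (n - 1))
    (hST1 : s (Fin.last k₁) + t 0 ≤ n) (hST2 : s 0 + t (Fin.last k₂) ≤ n)
    (v : ℤ) (hv : v ∈ Finset.Icc (1 : ℤ) (n : ℤ))
    (a : Fin (k₁ + 1) → ℕ) (b : Fin (k₂ + 1) → ℕ)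
    (hW : ∃ ℓ : ℕ, ∃ w : ℕ → ℤ,
      w 0 = v ∧
      (∀ k < ℓ, ToepArc n (Finset.image s Finset.univ) (Finset.image t Finset.univ)
        (w k) (w (k + 1))) ∧
      (∀ i : Fin (k₁ + 1), ArcCount w ℓ ((s i : ℤ)) = a i) ∧
      (∀ j : Fin (k₂ + 1), ArcCount w ℓ (-(t j : ℤ)) = b j))
    (A B : ℕ) (hA : a 0 ≤ A) (hB : b 0 ≤ B)
    (hrange1 : 1 ≤ v + (A : ℤ) * (s 0 : ℤ)
        + ∑ i ∈ Finset.univ.filter (fun i : Fin (k₁ + 1) => i ≠ 0), (a i : ℤ) * (s i : ℤ)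
        - (B : ℤ) * (t 0 : ℤ)
        - ∑ j ∈ Finset.univ.filter (fun j : Fin (k₂ + 1) => j ≠ 0), (b j : ℤ) * (t j : ℤ))
    (hrange2 : v + (A : ℤ) * (s 0 : ℤ)
        + ∑ i ∈ Finset.univ.filter (fun i : Fin (k₁ + 1) => i ≠ 0), (a i : ℤ) * (s i : ℤ)
        - (B : ℤ) * (t 0 : ℤ)
        - ∑ j ∈ Finset.univ.filter (fun j : Fin (k₂ + 1) => j ≠ 0), (b j : ℤ) * (t j : ℤ)
        ≤ (n : ℤ)) :
    ∃ ℓ : ℕ, ∃ w : ℕ → ℤ,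
      w 0 = v ∧
      (∀ k < ℓ, ToepArc n (Finset.image s Finset.univ) (Finset.image t Finset.univ)
        (w k) (w (k + 1))) ∧
      ArcCount w ℓ ((s 0 : ℤ)) = A ∧
      ArcCount w ℓ (-(t 0 : ℤ)) = B ∧
      (∀ i : Fin (k₁ + 1), i ≠ 0 → ArcCount w ℓ ((s i : ℤ)) = a i) ∧
      (∀ j : Fin (k₂ + 1), j ≠ 0 → ArcCount w ℓ (-(t j : ℤ)) = b j) := by
  obtain ⟨ℓ, w, hw0, harc, hca, hcb⟩ := hW
  -- basic facts about s 0, t 0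
  have hs0 : 1 ≤ s 0 := (Finset.mem_Icc.mp (hsmem 0)).1
  have ht0 : 1 ≤ t 0 := (Finset.mem_Icc.mp (htmem 0)).1
  have hst : s 0 + t 0 ≤ n := by
    have := ht.monotone (Fin.le_last (0 : Fin (k₂ + 1)))
    omega
  -- endpoint of the original walk
  have hv' := Finset.mem_Icc.mp hv
  have he1 : 1 ≤ w ℓ ∧ w ℓ ≤ (n : ℤ) := by
    rcases Nat.eq_zero_or_pos ℓ with h0 | h0
    · rw [h0, hw0]; exact hv'
    · have := harc (ℓ - 1) (by omega)
      have hℓ : ℓ - 1 + 1 = ℓ := by omega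
      rw [hℓ] at this
      exact Finset.mem_Icc.mp this.2.1
  -- telescoping: the endpoint equals v plus the weighted arc counts
  have key : w ℓ - v = (∑ i, (a i : ℤ) * s i) - ∑ j, (b j : ℤ) * t j := by
    have htel : ∑ k ∈ Finset.range ℓ, (w (k+1) - w k) = w ℓ - w 0 :=
      Finset.sum_range_sub w ℓ
    set V : Finset ℤ := (Finset.univ.image fun i : Fin (k₁+1) => (s i : ℤ)) ∪
        (Finset.univ.image fun j : Fin (k₂+1) => -(t j : ℤ)) with hV
    have hmaps : ∀ k ∈ Finset.range ℓ, w (k+1) - w k ∈ V := by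
      intro k hk
      obtain ⟨_, _, h | h⟩ := harc k (Finset.mem_range.mp hk)
      · obtain ⟨s', hs', he'⟩ := h
        obtain ⟨i, _, rfl⟩ := Finset.mem_image.mp hs'
        exact Finset.mem_union_left _
          (Finset.mem_image.mpr ⟨i, Finset.mem_univ i, by omega⟩)
      · obtain ⟨t', ht', he'⟩ := h
        obtain ⟨j, _, rfl⟩ := Finset.mem_image.mp ht'
        exact Finset.mem_union_right _
          (Finset.mem_image.mpr ⟨j, Finset.mem_univ j, by omega⟩)
    have hfib := Finset.sum_fiberwise_of_maps_to hmaps (fun k => w (k+1) - w k)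
    have hfib2 : ∑ y ∈ V, (ArcCount w ℓ y : ℤ) * y = w ℓ - w 0 := by
      rw [← htel, ← hfib]
      apply Finset.sum_congr rfl
      intro y _
      rw [Finset.sum_congr rfl (fun k hk => (Finset.mem_filter.mp hk).2),
        Finset.sum_const, nsmul_eq_mul]
      rfl
    have hdisj : Disjoint (Finset.univ.image fun i : Fin (k₁+1) => (s i : ℤ))
        (Finset.univ.image fun j : Fin (k₂+1) => -(t j : ℤ)) := by
      rw [Finset.disjoint_left]
      intro x h1 h2
      obtain ⟨i, _, rfl⟩ := Finset.mem_image.mp h1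
      obtain ⟨j, _, hj⟩ := Finset.mem_image.mp h2
      have := (Finset.mem_Icc.mp (hsmem i)).1
      have := (Finset.mem_Icc.mp (htmem j)).1
      omega
    rw [hV, Finset.sum_union hdisj,
      Finset.sum_image (by
        intro i _ i' _ hii
        exact hs.injective (by have hii' : (s i : ℤ) = s i' := hii; exact_mod_cast hii')),
      Finset.sum_image (by
        intro j _ j' _ hjj
        exact ht.injective (by have hjj' : -(t j : ℤ) = -(t j') := hjj; omega))] at hfib2
    rw [← hw0, ← hfib2]
    have e1 : ∑ x, (ArcCount w ℓ ((s x : ℤ)) : ℤ) * s x = ∑ i, (a i : ℤ) * s i :=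
      Finset.sum_congr rfl fun i _ => by rw [hca i]
    have e2 : ∑ x, (ArcCount w ℓ (-(t x : ℤ)) : ℤ) * (-(t x : ℤ)) = -∑ j, (b j : ℤ) * t j := by
      rw [← Finset.sum_neg_distrib]
      exact Finset.sum_congr rfl fun j _ => by rw [hcb j]; ring
    rw [e1, e2]
    ring
  -- set up the appended zig-zag walk
  set p := A - a 0 with hp
  set q := B - b 0 with hq
  have hpz : (p : ℤ) = (A : ℤ) - a 0 := by rw [hp]; exact Nat.cast_sub hA
  have hqz : (q : ℤ) = (B : ℤ) - b 0 := by rw [hq]; exact Nat.cast_sub hB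
  have hEeq : w ℓ + (p : ℤ) * s 0 - (q : ℤ) * t 0
      = v + (A : ℤ) * (s 0 : ℤ)
        + ∑ i ∈ Finset.univ.filter (fun i : Fin (k₁ + 1) => i ≠ 0), (a i : ℤ) * (s i : ℤ)
        - (B : ℤ) * (t 0 : ℤ)
        - ∑ j ∈ Finset.univ.filter (fun j : Fin (k₂ + 1) => j ≠ 0), (b j : ℤ) * (t j : ℤ) := by
    rw [sum_split (fun i => (a i : ℤ) * s i), sum_split (fun j => (b j : ℤ) * t j)] at key
    have h1 : (p : ℤ) * s 0 = (A : ℤ) * s 0 - (a 0 : ℤ) * s 0 := by rw [hpz]; ring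
    have h2 : (q : ℤ) * t 0 = (B : ℤ) * t 0 - (b 0 : ℤ) * t 0 := by rw [hqz]; ring
    linarith [key, h1, h2]
  obtain ⟨w2, hw20, hw2m, harc2, hc21, hc22⟩ :=
    aux_walk n (s 0) (t 0) hs0 ht0 hst (p + q) p q rfl (w ℓ) he1.1 he1.2
      (by rw [hEeq]; exact hrange1) (by rw [hEeq]; exact hrange2)
  set m := p + q with hm
  -- glue the two walks
  set W : ℕ → ℤ := fun k => if k < ℓ then w k else w2 (k - ℓ) with hWdef
  have hW1 : ∀ k ≤ ℓ, W k = w k := by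
    intro k hk
    simp only [hWdef]
    split_ifs with h
    · rfl
    · obtain rfl : k = ℓ := by omega
      rw [Nat.sub_self, hw20]
  have hW2 : ∀ k, W (ℓ + k) = w2 k := by
    intro k
    simp only [hWdef]
    rw [if_neg (by omega)]
    congr 1
    omega
  have hdsplit : ∀ x : ℤ, ArcCount W (ℓ + m) x = ArcCount w ℓ x + ArcCount w2 m x := by
    intro x
    rw [ArcCount_add]
    congr 1
    · exact ArcCount_congr (fun k hk => by
        rw [hW1 k (by omega), hW1 (k+1) (by omega)]) x
    · exact ArcCount_congr (fun k hk => by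
        have e1 := hW2 k
        have e2 := hW2 (k+1)
        show W (ℓ + (k+1)) - W (ℓ + k) = w2 (k+1) - w2 k
        rw [e1, e2]) x
  have hsame : ∀ i : Fin (k₁ + 1), i ≠ 0 → ArcCount w2 m ((s i : ℤ)) = 0 := by
    intro i hi
    apply ArcCount_zero_of
    intro k hk hcon
    obtain ⟨_, _, hstep⟩ := harc2 k hk
    have hsne : s i ≠ s 0 := fun h => hi (hs.injective h)
    rcases hstep with h | h <;> omega
  have htame : ∀ j : Fin (k₂ + 1), j ≠ 0 → ArcCount w2 m (-(t j : ℤ)) = 0 := by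
    intro j hj
    apply ArcCount_zero_of
    intro k hk hcon
    obtain ⟨_, _, hstep⟩ := harc2 k hk
    have htne : t j ≠ t 0 := fun h => hj (ht.injective h)
    rcases hstep with h | h <;> omega
  refine ⟨ℓ + m, W, ?_, ?_, ?_, ?_, ?_, ?_⟩
  · rw [hW1 0 (by omega)]; exact hw0
  · -- arcs
    intro k hk
    rcases Nat.lt_or_ge k ℓ with h | h
    · have e1 := hW1 k (by omega)
      have e2 := hW1 (k+1) (by omega)
      rw [e1, e2]
      exact harc k h
    · obtain ⟨k', rfl⟩ : ∃ k', k = ℓ + k' := ⟨k - ℓ, by omega⟩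
      have hk' : k' < m := by omega
      have e1 := hW2 k'
      have e2 := hW2 (k'+1)
      rw [show ℓ + k' + 1 = ℓ + (k' + 1) from by omega, e1, e2]
      obtain ⟨⟨hb1, hb2⟩, ⟨hb3, hb4⟩, hstep⟩ := harc2 k' hk'
      refine ⟨Finset.mem_Icc.mpr ⟨hb1, hb2⟩, Finset.mem_Icc.mpr ⟨hb3, hb4⟩, ?_⟩
      rcases hstep with h | h
      · exact Or.inl ⟨s 0, Finset.mem_image_of_mem s (Finset.mem_univ 0), h⟩
      · exact Or.inr ⟨t 0, Finset.mem_image_of_mem t (Finset.mem_univ 0), h⟩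
  · rw [hdsplit, hca 0, hc21]; omega
  · rw [hdsplit, hcb 0, hc22]; omega
  · intro i hi
    rw [hdsplit, hca i, hsame i hi]
    omega
  · intro j hj
    rw [hdsplit, hcb j, htame j hj]
    omega
end

section
/- Let D be the Toeplitz digraph of T_n⟨S;T⟩ with S = {s_1 < ⋯ < s_{k_1}}, T = {t_1 < ⋯ < t_{k_2}}, max S + min T ≤ n and min S + max T ≤ n, and let d = gcd{s + t : s ∈ S, t ∈ T}. Suppose that for each 1 ≤ i ≤ d, the subgraph of the competition graph C(D) induced on the vertex set {v ∈ {1,…,n} : v ≡ i (mod d)} is connected. Then for every integer m ≥ 2(⌈n/d⌉ − 1)·(max{⌈t_{k_2}/s_1⌉, ⌈s_{k_1}/t_1⌉} + 1) + 2(s_1 + t_1) and all distinct vertices u, v of D, u and v are adjacent in the m-step competition graph C^m(D) if and only if u ≡ v (mod d). (That is, the competition index of T_n⟨S;T⟩ is at most 2(⌈n/d⌉ − 1)(max{⌈t_{k_2}/s_1⌉, ⌈s_{k_1}/t_1⌉} + 1) + 2(s_1 + t_1).) -/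
/-- There is a directed `(u,v)`-walk of length `m` in the Toeplitz digraph. -/
def HasWalk (n : ℕ) (S T : Finset ℕ) (m : ℕ) (u v : ℤ) : Prop :=
  ∃ w : ℕ → ℤ, w 0 = u ∧ w m = v ∧ ∀ i < m, ToepArc n S T (w i) (w (i + 1))

/-- `u` and `v` are adjacent in the `m`-step competition graph `C^m(D)`;
`m = 1` gives the competition graph `C(D)`. -/
def CompAdj (n : ℕ) (S T : Finset ℕ) (m : ℕ) (u v : ℤ) : Prop :=
  u ≠ v ∧ ∃ x : ℤ, HasWalk n S T m u x ∧ HasWalk n S T m v x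

section ToepAux

variable {n : ℕ} {S T : Finset ℕ}

theorem toep_hasWalk_refl (u : ℤ) : HasWalk n S T 0 u u :=
  ⟨fun _ => u, rfl, rfl, fun i hi => absurd hi (Nat.not_lt_zero i)⟩

theorem toep_hasWalk_trans {m1 m2 : ℕ} {u q x : ℤ} (h1 : HasWalk n S T m1 u q)
    (h2 : HasWalk n S T m2 q x) : HasWalk n S T (m1 + m2) u x := by
  obtain ⟨w1, h10, h1m, h1a⟩ := h1
  obtain ⟨w2, h20, h2m, h2a⟩ := h2
  refine ⟨fun i => if i < m1 then w1 i else w2 (i - m1), ?_, ?_, ?_⟩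
  · by_cases h : 0 < m1
    · simp only [if_pos h]; exact h10
    · have hm1 : m1 = 0 := by omega
      subst hm1
      simp only [if_neg h, Nat.sub_zero, h20, ← h1m, h10]
  · have h : ¬ (m1 + m2 < m1) := by omega
    simp only [if_neg h, Nat.add_sub_cancel_left, h2m]
  · intro i hi
    rcases lt_trichotomy (i + 1) m1 with hlt | heq | hgt
    · simp only [if_pos hlt, if_pos (by omega : i < m1)]
      exact h1a i (by omega)
    · have hi1 : i < m1 := by omega
      simp only [if_pos hi1, if_neg (by omega : ¬ (i + 1 < m1))]
      have : w2 (i + 1 - m1) = w1 m1 := by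
        rw [heq, Nat.sub_self, h20, h1m]
      rw [this, ← heq]
      exact h1a i (by omega)
    · have hi1 : ¬ (i < m1) := by omega
      simp only [if_neg hi1, if_neg (by omega : ¬ (i + 1 < m1))]
      have : i + 1 - m1 = (i - m1) + 1 := by omega
      rw [this]
      exact h2a (i - m1) (by omega)

theorem toep_hasWalk_single {u v : ℤ} (h : ToepArc n S T u v) : HasWalk n S T 1 u v := by
  refine ⟨fun i => if i = 0 then u else v, rfl, rfl, ?_⟩
  intro i hi
  have : i = 0 := by omega
  subst this
  simpa using h

theorem toep_hasWalk_cons {m : ℕ} {u q x : ℤ} (h : ToepArc n S T u q)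
    (h2 : HasWalk n S T m q x) : HasWalk n S T (m + 1) u x := by
  have := toep_hasWalk_trans (toep_hasWalk_single h) h2
  rwa [Nat.add_comm] at this

theorem toep_arc_up {a : ℕ} (ha : a ∈ S) {p : ℤ} (h1 : 1 ≤ p) (h2 : p + a ≤ n) :
    ToepArc n S T p (p + a) := by
  refine ⟨Finset.mem_Icc.2 ⟨h1, ?_⟩, Finset.mem_Icc.2 ⟨?_, h2⟩, Or.inl ⟨a, ha, rfl⟩⟩
  · have : (0:ℤ) ≤ a := Int.natCast_nonneg a
    omega
  · have : (0:ℤ) ≤ a := Int.natCast_nonneg a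
    omega

theorem toep_arc_down {b : ℕ} (hb : b ∈ T) {p : ℤ} (h1 : 1 ≤ p - b) (h2 : p ≤ n) :
    ToepArc n S T p (p - b) := by
  refine ⟨Finset.mem_Icc.2 ⟨?_, h2⟩, Finset.mem_Icc.2 ⟨h1, ?_⟩, Or.inr ⟨b, hb, rfl⟩⟩
  · have : (0:ℤ) ≤ b := Int.natCast_nonneg b
    omega
  · have : (0:ℤ) ≤ b := Int.natCast_nonneg b
    omega

end ToepAux

section ToepAux2

variable {n : ℕ} {S T : Finset ℕ} {s0 t0 : ℕ}

/-- A walk using `a` up-steps of size `s0` and `b` down-steps of size `t0`. -/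
theorem toep_run (hs0 : s0 ∈ S) (ht0 : t0 ∈ T) (hs0p : 1 ≤ s0) (ht0p : 1 ≤ t0)
    (hN : s0 + t0 ≤ n) :
    ∀ (k a b : ℕ) (z x : ℤ), a + b = k → 1 ≤ z → z ≤ n → 1 ≤ x → x ≤ n →
      x = z + a * s0 - b * t0 → HasWalk n S T k z x := by
  intro k
  induction k with
  | zero =>
    intro a b z x hab hz1 hzn hx1 hxn hx
    have ha : a = 0 := by omega
    have hb : b = 0 := by omega
    subst ha; subst hb
    have : x = z := by simpa using hx
    rw [this]
    exact toep_hasWalk_refl z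
  | succ k ih =>
    intro a b z x hab hz1 hzn hx1 hxn hx
    have hs0z : (1:ℤ) ≤ (s0:ℤ) := by exact_mod_cast hs0p
    have ht0z : (1:ℤ) ≤ (t0:ℤ) := by exact_mod_cast ht0p
    have hNz : (s0:ℤ) + t0 ≤ n := by exact_mod_cast hN
    rcases Nat.eq_zero_or_pos a with ha | ha
    · -- only down steps
      subst ha
      have hb : b = k + 1 := by omega
      subst hb
      have hb' : ((k:ℤ) + 1) * t0 = (k:ℤ) * t0 + t0 := by ring
      have hxz : x = z - ((k:ℤ) + 1) * t0 := by
        rw [hx]; push_cast; ring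
      have hkt : (0:ℤ) ≤ (k:ℤ) * t0 := by positivity
      have harc : ToepArc n S T z (z - t0) := toep_arc_down ht0 (by omega) hzn
      refine toep_hasWalk_cons harc (ih 0 k (z - t0) x (by omega) (by omega) (by omega)
        hx1 hxn ?_)
      rw [hxz]; push_cast; ring
    · -- a > 0
      by_cases hup : z + s0 ≤ n
      · -- step up
        have harc : ToepArc n S T z (z + s0) := toep_arc_up hs0 hz1 hup
        obtain ⟨a', rfl⟩ : ∃ a', a = a' + 1 := ⟨a - 1, by omega⟩
        refine toep_hasWalk_cons harc (ih a' b (z + s0) x (by omega) (by omega) hup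
          hx1 hxn ?_)
        rw [hx]; push_cast; ring
      · -- must step down; b > 0
        push_neg at hup
        have hb : 0 < b := by
          by_contra hb0
          have hb0' : b = 0 := by omega
          subst hb0'
          obtain ⟨a', rfl⟩ : ∃ a', a = a' + 1 := ⟨a - 1, by omega⟩
          have h0' : (0:ℤ) ≤ (a':ℤ) * s0 := by positivity
          have hxx : x = z + ((a':ℤ) * s0 + s0) := by rw [hx]; push_cast; ring
          omega
        have hz' : (1:ℤ) ≤ z - t0 := by omega
        have harc : ToepArc n S T z (z - t0) := toep_arc_down ht0 hz' hzn
        obtain ⟨b', rfl⟩ : ∃ b', b = b' + 1 := ⟨b - 1, by omega⟩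
        refine toep_hasWalk_cons harc (ih a b' (z - t0) x (by omega) hz' (by omega)
          hx1 hxn ?_)
        rw [hx]; push_cast; ring

/-- Descend by `-t0` steps until there is room `a` above. -/
theorem toep_descend (ht0 : t0 ∈ T) (ht0p : 1 ≤ t0) {a : ℕ} (hat : a + t0 ≤ n) :
    ∀ (K : ℕ) (p : ℤ), 1 ≤ p → p ≤ n → p + a ≤ n + K * t0 →
      ∃ k ≤ K, HasWalk n S T k p (p - k * t0) ∧ 1 ≤ p - k * t0 ∧ p - k * t0 + a ≤ n := by
  intro K
  induction K with
  | zero =>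
    intro p h1 h2 h3
    exact ⟨0, le_refl 0, by simpa using toep_hasWalk_refl p, by simpa using h1,
      by simpa using h3⟩
  | succ K ih =>
    intro p h1 h2 h3
    by_cases hro : p + a ≤ n
    · exact ⟨0, by omega, by simpa using toep_hasWalk_refl p, by simpa using h1,
        by simpa using hro⟩
    · push_neg at hro
      have ht0z : (1:ℤ) ≤ (t0:ℤ) := by exact_mod_cast ht0p
      have hatz : (a:ℤ) + t0 ≤ n := by exact_mod_cast hat
      have hp' : 1 ≤ p - t0 := by omega
      have harc : ToepArc n S T p (p - t0) := toep_arc_down ht0 hp' h2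
      have h3' : (p - t0) + a ≤ n + K * t0 := by
        have : ((K:ℤ) + 1) * t0 = (K:ℤ) * t0 + t0 := by ring
        push_cast at h3 ⊢
        omega
      obtain ⟨k, hk, hw, hb1, hb2⟩ := ih (p - t0) hp' (by omega) h3'
      refine ⟨k + 1, by omega, ?_, ?_, ?_⟩
      · have := toep_hasWalk_cons harc hw
        have heq : p - t0 - k * t0 = p - (k + 1 : ℕ) * t0 := by push_cast; ring
        rwa [heq] at this
      · have heq : p - ((k + 1 : ℕ) : ℤ) * t0 = p - t0 - k * t0 := by push_cast; ring
        rw [heq]; exact hb1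
      · have heq : p - ((k + 1 : ℕ) : ℤ) * t0 = p - t0 - k * t0 := by push_cast; ring
        rw [heq]; exact hb2

/-- Ascend by `+s0` steps until at least `1 + b`. -/
theorem toep_ascend (hs0 : s0 ∈ S) (hs0p : 1 ≤ s0) {b : ℕ} (hbs : s0 + b ≤ n) :
    ∀ (K : ℕ) (p : ℤ), 1 ≤ p → p ≤ n → 1 + b ≤ p + K * s0 →
      ∃ k ≤ K, HasWalk n S T k p (p + k * s0) ∧ 1 + b ≤ p + k * s0 ∧ p + k * s0 ≤ n := by
  intro K
  induction K with
  | zero =>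
    intro p h1 h2 h3
    exact ⟨0, le_refl 0, by simpa using toep_hasWalk_refl p, by simpa using h3,
      by simpa using h2⟩
  | succ K ih =>
    intro p h1 h2 h3
    by_cases hro : 1 + (b:ℤ) ≤ p
    · exact ⟨0, by omega, by simpa using toep_hasWalk_refl p, by simpa using hro,
        by simpa using h2⟩
    · push_neg at hro
      have hs0z : (1:ℤ) ≤ (s0:ℤ) := by exact_mod_cast hs0p
      have hbsz : (s0:ℤ) + b ≤ n := by exact_mod_cast hbs
      have hup : p + s0 ≤ n := by omega
      have harc : ToepArc n S T p (p + s0) := toep_arc_up hs0 h1 hup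
      have h3' : 1 + (b:ℤ) ≤ (p + s0) + K * s0 := by
        have : ((K:ℤ) + 1) * s0 = (K:ℤ) * s0 + s0 := by ring
        push_cast at h3 ⊢
        omega
      obtain ⟨k, hk, hw, hb1, hb2⟩ := ih (p + s0) (by omega) hup h3'
      have heq : p + ((k + 1 : ℕ) : ℤ) * s0 = p + s0 + k * s0 := by push_cast; ring
      refine ⟨k + 1, by omega, ?_, ?_, ?_⟩
      · have := toep_hasWalk_cons harc hw
        rwa [← heq] at this
      · rw [heq]; exact hb1
      · rw [heq]; exact hb2

/-- Generator predicate: the allowed "class shift" values. -/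
def ToepGen (S T : Finset ℕ) (t0 : ℕ) (g : ℤ) : Prop :=
  (∃ a ∈ S, g = (a : ℤ) + t0) ∨ (∃ b ∈ T, g = (t0 : ℤ) - b)

/-- One gadget: at cost at most `M+1` steps, shift the potential `q + k•t0` by `g` mod `s0+t0`. -/
theorem toep_gadget (hs0 : s0 ∈ S) (ht0 : t0 ∈ T) (hs0p : 1 ≤ s0) (ht0p : 1 ≤ t0)
    {M : ℕ}
    (hSn : ∀ a ∈ S, a + t0 ≤ n) (hTn : ∀ b ∈ T, s0 + b ≤ n)
    (hM1 : ∀ b ∈ T, b ≤ M * s0) (hM2 : ∀ a ∈ S, a ≤ M * t0)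
    {g : ℤ} (hg : ToepGen S T t0 g) (p : ℤ) (hp1 : 1 ≤ p) (hpn : p ≤ n) :
    ∃ k q, k ≤ M + 1 ∧ HasWalk n S T k p q ∧ 1 ≤ q ∧ q ≤ n ∧
      ((s0:ℤ) + t0) ∣ (q + k * t0 - (p + g)) := by
  rcases hg with ⟨a, haS, rfl⟩ | ⟨b, hbT, rfl⟩
  · -- descend, then step up by a
    have hat : a + t0 ≤ n := hSn a haS
    have haM : (a:ℤ) ≤ (M:ℤ) * t0 := by exact_mod_cast hM2 a haS
    obtain ⟨k, hkM, hw, hq1, hq2⟩ := toep_descend ht0 ht0p hat M p hp1 hpn (by omega)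
    have harc : ToepArc n S T (p - k * t0) (p - k * t0 + a) := toep_arc_up haS hq1 hq2
    have hw2 : HasWalk n S T (k + 1) p (p - k * t0 + a) := by
      have := toep_hasWalk_trans hw (toep_hasWalk_single harc)
      exact this
    refine ⟨k + 1, p - k * t0 + a, by omega, hw2, ?_, ?_, ?_⟩
    · have : (0:ℤ) ≤ (a:ℤ) := Int.natCast_nonneg a
      omega
    · omega
    · have : p - k * t0 + a + ((k+1:ℕ):ℤ) * t0 - (p + ((a:ℤ) + t0)) = 0 := by
        push_cast; ring
      rw [this]
      exact dvd_zero _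
  · -- ascend, then step down by b
    have hbs : s0 + b ≤ n := hTn b hbT
    have hbM : (b:ℤ) ≤ (M:ℤ) * s0 := by exact_mod_cast hM1 b hbT
    obtain ⟨k, hkM, hw, hq1, hq2⟩ := toep_ascend hs0 hs0p hbs M p hp1 hpn (by omega)
    have harc : ToepArc n S T (p + k * s0) (p + k * s0 - b) := toep_arc_down hbT (by omega) hq2
    have hw2 : HasWalk n S T (k + 1) p (p + k * s0 - b) :=
      toep_hasWalk_trans hw (toep_hasWalk_single harc)
    refine ⟨k + 1, p + k * s0 - b, by omega, hw2, by omega, by omega, ?_⟩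
    refine ⟨k, ?_⟩
    push_cast
    ring

/-- Chain of gadgets along a list of generators. -/
theorem toep_chain (hs0 : s0 ∈ S) (ht0 : t0 ∈ T) (hs0p : 1 ≤ s0) (ht0p : 1 ≤ t0)
    {M : ℕ}
    (hSn : ∀ a ∈ S, a + t0 ≤ n) (hTn : ∀ b ∈ T, s0 + b ≤ n)
    (hM1 : ∀ b ∈ T, b ≤ M * s0) (hM2 : ∀ a ∈ S, a ≤ M * t0) :
    ∀ (L : List ℤ), (∀ g ∈ L, ToepGen S T t0 g) → ∀ p : ℤ, 1 ≤ p → p ≤ n →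
      ∃ k q, k ≤ L.length * (M + 1) ∧ HasWalk n S T k p q ∧ 1 ≤ q ∧ q ≤ n ∧
        ((s0:ℤ) + t0) ∣ (q + k * t0 - (p + L.sum)) := by
  intro L
  induction L with
  | nil =>
    intro _ p hp1 hpn
    exact ⟨0, p, by simp, toep_hasWalk_refl p, hp1, hpn, by simp⟩
  | cons g L ih =>
    intro hmem p hp1 hpn
    obtain ⟨k1, q1, hk1, hw1, hq11, hq1n, hd1⟩ :=
      toep_gadget hs0 ht0 hs0p ht0p hSn hTn hM1 hM2 (hmem g (by simp)) p hp1 hpn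
    obtain ⟨k2, q2, hk2, hw2, hq21, hq2n, hd2⟩ :=
      ih (fun g' hg' => hmem g' (by simp [hg'])) q1 hq11 hq1n
    refine ⟨k1 + k2, q2, ?_, toep_hasWalk_trans hw1 hw2, hq21, hq2n, ?_⟩
    · simp only [List.length_cons]
      calc k1 + k2 ≤ (M + 1) + L.length * (M + 1) := by omega
      _ = (L.length + 1) * (M + 1) := by ring
    · have : q2 + ((k1 + k2 : ℕ) : ℤ) * t0 - (p + (g :: L).sum) =
          (q2 + k2 * t0 - (q1 + L.sum)) + (q1 + k1 * t0 - (p + g)) := by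
        simp only [List.sum_cons]
        push_cast
        ring
      rw [this]
      exact dvd_add hd2 hd1

end ToepAux2

section ToepAux3

/-- Bezout for a `Finset.gcd` over `ℕ`. -/
theorem toep_bezout {ι : Type*} [DecidableEq ι] (F : Finset ι) (f : ι → ℕ) :
    ∃ c : ι → ℤ, ((F.gcd f : ℕ) : ℤ) = ∑ p ∈ F, c p * f p := by
  induction F using Finset.induction_on with
  | empty => exact ⟨fun _ => 0, by simp⟩
  | @insert a F ha ih =>
    obtain ⟨c, hc⟩ := ih
    have hgcd : (insert a F).gcd f = Nat.gcd (f a) (F.gcd f) := Finset.gcd_insert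
    refine ⟨fun p => if p = a then Nat.gcdA (f a) (F.gcd f)
      else Nat.gcdB (f a) (F.gcd f) * c p, ?_⟩
    rw [hgcd, Finset.sum_insert ha]
    have hB := Nat.gcd_eq_gcd_ab (f a) (F.gcd f)
    have hrest : ∑ p ∈ F, (if p = a then Nat.gcdA (f a) (F.gcd f)
        else Nat.gcdB (f a) (F.gcd f) * c p) * f p
        = Nat.gcdB (f a) (F.gcd f) * ∑ p ∈ F, c p * f p := by
      rw [Finset.mul_sum]
      refine Finset.sum_congr rfl fun p hp => ?_
      have : p ≠ a := fun h => ha (h ▸ hp)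
      rw [if_neg this]
      ring
    rw [hrest, ← hc, hB]
    simp only [eq_self_iff_true, ite_true]
    ring

/-- Turn an integer combination into a list of generators, modulo `N`. -/
theorem toep_listify {ι : Type*} (P : ℤ → Prop) (F : Finset ι) (gg e : ι → ℤ)
    (hPG : ∀ p ∈ F, P (gg p)) {N : ℤ} (hN : 0 < N) :
    ∃ L : List ℤ, (∀ g ∈ L, P g) ∧ N ∣ (∑ p ∈ F, e p * gg p) - L.sum := by
  classical
  induction F using Finset.induction_on with
  | empty => exact ⟨[], by simp, by simp⟩
  | @insert a F ha ih =>
    obtain ⟨L, hL, hdvd⟩ := ih (fun p hp => hPG p (Finset.mem_insert_of_mem hp))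
    set c : ℤ := e a % N with hc
    have hc0 : 0 ≤ c := Int.emod_nonneg _ hN.ne'
    refine ⟨List.replicate c.toNat (gg a) ++ L, ?_, ?_⟩
    · intro g hg
      rcases List.mem_append.1 hg with hg | hg
      · rw [List.eq_of_mem_replicate hg]
        exact hPG a (Finset.mem_insert_self a F)
      · exact hL g hg
    · rw [Finset.sum_insert ha, List.sum_append, List.sum_replicate]
      have hsmul : c.toNat • gg a = c * gg a := by
        rw [nsmul_eq_mul, Int.toNat_of_nonneg hc0]
      have key : e a * gg a + (∑ p ∈ F, e p * gg p)
          - (c.toNat • gg a + L.sum)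
          = (e a - c) * gg a + ((∑ p ∈ F, e p * gg p) - L.sum) := by
        rw [hsmul]; ring
      rw [key]
      refine dvd_add (Dvd.dvd.mul_right ?_ _) hdvd
      have := Int.emod_emod_of_dvd (e a) (dvd_refl N)
      have h2 : e a - c = N * (e a / N) := by
        rw [hc, Int.emod_def]; ring
      exact h2 ▸ Dvd.intro _ rfl

/-- Shortening: a generator list can be replaced by one of length `< N/d`. -/
theorem toep_shorten {N d : ℕ} (hd : 0 < d) (hdN : d ∣ N) (hN : 0 < N)
    (P : ℤ → Prop) (hP : ∀ g, P g → (d:ℤ) ∣ g) (Δ : ℤ)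
    (hex : ∃ L : List ℤ, (∀ g ∈ L, P g) ∧ (N:ℤ) ∣ Δ - L.sum) :
    ∃ L : List ℤ, (∀ g ∈ L, P g) ∧ (N:ℤ) ∣ Δ - L.sum ∧ L.length ≤ N / d - 1 := by
  classical
  set Q : ℕ → Prop := fun k => ∃ L : List ℤ, L.length = k ∧ (∀ g ∈ L, P g) ∧
    (N:ℤ) ∣ Δ - L.sum with hQ
  have hexQ : ∃ k, Q k := by
    obtain ⟨L, h1, h2⟩ := hex
    exact ⟨L.length, L, rfl, h1, h2⟩
  set k0 := Nat.find hexQ with hk0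
  obtain ⟨L, hlen, hmem, hdvd⟩ := Nat.find_spec hexQ
  by_cases hsmall : k0 ≤ N / d - 1
  · exact ⟨L, hmem, hdvd, hlen ▸ hsmall⟩
  exfalso
  have hNd1 : 1 ≤ N / d := Nat.one_le_div_iff hd |>.2 (Nat.le_of_dvd hN hdN)
  have hbig : N / d ≤ k0 := by omega
  -- partial sums
  set f : ℕ → ℤ := fun i => ((L.take i).sum) with hf
  have hfd : ∀ i, (d:ℤ) ∣ f i := by
    intro i
    refine List.dvd_sum fun x hx => hP x (hmem x (List.take_subset i L hx))
  have hdNz : (d:ℤ) ∣ (N:ℤ) := Int.natCast_dvd_natCast.2 hdN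
  have hNz : (0:ℤ) < N := by exact_mod_cast hN
  have hdz : (0:ℤ) < d := by exact_mod_cast hd
  -- pigeonhole on residues of partial sums
  have hmaps : ∀ i ∈ Finset.range (N / d + 1),
      ((f i % N) / d).toNat ∈ Finset.range (N / d) := by
    intro i _
    have h1 : 0 ≤ f i % N := Int.emod_nonneg _ hNz.ne'
    have h2 : f i % N < N := Int.emod_lt_of_pos _ hNz
    have h3 : (d:ℤ) ∣ f i % N := by
      have : f i % N = f i - N * (f i / N) := Int.emod_def _ _
      rw [this]
      exact dvd_sub (hfd i) (Dvd.dvd.mul_right hdNz _)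
    obtain ⟨y, hy⟩ := h3
    have hy0 : 0 ≤ y := by nlinarith
    have hylt : y < ((N / d : ℕ) : ℤ) := by
      have hNd : ((N / d : ℕ) : ℤ) * d = N := by
        exact_mod_cast Nat.div_mul_cancel hdN
      nlinarith
    rw [Finset.mem_range]
    have : (f i % N) / d = y := by rw [hy]; exact Int.mul_ediv_cancel_left _ hdz.ne'
    rw [this]
    omega
  obtain ⟨i, hi, j, hj, hij, hfij⟩ :=
    Finset.exists_ne_map_eq_of_card_lt_of_maps_to
      (by simp : (Finset.range (N / d)).card < (Finset.range (N / d + 1)).card) hmaps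
  -- recover equal residues
  have hres : ∀ {i}, i ∈ Finset.range (N / d + 1) → f i % N = d * ((f i % N) / d) := by
    intro i hi
    have h3 : (d:ℤ) ∣ f i % N := by
      rw [Int.emod_def]
      exact dvd_sub (hfd i) (Dvd.dvd.mul_right hdNz _)
    exact (Int.mul_ediv_cancel' h3).symm
  have hmod : f i % N = f j % N := by
    have h1 : 0 ≤ (f i % N) / d := by
      have := Int.emod_nonneg (f i) hNz.ne'
      positivity
    have h2 : 0 ≤ (f j % N) / d := by
      have := Int.emod_nonneg (f j) hNz.ne'
      positivity
    have : (f i % N) / d = (f j % N) / d := by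
      have := congrArg (fun x : ℕ => (x : ℤ)) hfij
      simpa [Int.toNat_of_nonneg h1, Int.toNat_of_nonneg h2] using this
    rw [hres hi, hres hj, this]
  -- cut out the cycle between equal residues
  have hcut : ∀ a b : ℕ, a < b → b ≤ N / d → f a % N = f b % N → False := by
    intro a b hab hbN hfab
    have hbk : b ≤ L.length := by omega
    have hNdvd : (N:ℤ) ∣ f b - f a :=
      Int.ModEq.dvd (show f a ≡ f b [ZMOD (N:ℤ)] from hfab)
    set L' := L.take a ++ L.drop b with hL'
    have hlen' : L'.length = a + (L.length - b) := by
      simp only [hL', List.length_append, List.length_take, List.length_drop]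
      omega
    have hsum : L'.sum = f a + (L.drop b).sum := by
      simp only [hL', List.sum_append, hf]
    have hsumL : L.sum = f b + (L.drop b).sum := by
      conv_lhs => rw [← List.take_append_drop b L]
      simp only [List.sum_append, hf]
    have hmem' : ∀ g ∈ L', P g := by
      intro g hg
      rcases List.mem_append.1 hg with h | h
      · exact hmem g (List.take_subset _ _ h)
      · exact hmem g (List.drop_subset _ _ h)
    have hdvd' : (N:ℤ) ∣ Δ - L'.sum := by
      have heq : Δ - L'.sum = (Δ - L.sum) + (f b - f a) := by
        rw [hsum, hsumL]; ring
      rw [heq]; exact dvd_add hdvd hNdvd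
    have hQ' : Q L'.length := ⟨L', rfl, hmem', hdvd'⟩
    have hnot : ¬ Q L'.length := Nat.find_min hexQ (by omega)
    exact hnot hQ'
  have hiN : i ≤ N / d := by
    have := Finset.mem_range.1 hi
    omega
  have hjN : j ≤ N / d := by
    have := Finset.mem_range.1 hj
    omega
  rcases Ne.lt_or_gt hij with h | h
  · exact hcut i j h hjN hmod
  · exact hcut j i h hiN hmod.symm

end ToepAux3

theorem toep_walk_mod {n : ℕ} {S T : Finset ℕ} {d s0 : ℕ}
    (hstep : ∀ p q : ℤ, ToepArc n S T p q → (d:ℤ) ∣ q - p - s0) :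
    ∀ {m : ℕ} {u x : ℤ}, HasWalk n S T m u x → (d:ℤ) ∣ x - u - m * s0 := by
  rintro m u x ⟨w, h0, hm, ha⟩
  suffices h : ∀ i ≤ m, (d:ℤ) ∣ w i - w 0 - i * s0 by
    have := h m le_rfl
    rwa [h0, hm] at this
  intro i
  induction i with
  | zero => simp
  | succ i ih =>
    intro him
    have h1 := ih (by omega)
    have h2 := hstep _ _ (ha i (by omega))
    have heq : w (i+1) - w 0 - ((i+1:ℕ):ℤ) * s0
        = (w (i+1) - w i - s0) + (w i - w 0 - i * s0) := by push_cast; ring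
    rw [heq]
    exact dvd_add h2 h1

set_option maxHeartbeats 2000000 in
/-- (Competition-index bound.)  If each induced subgraph of `C(D)`
on a residue class modulo `d` is connected, then for every
`m ≥ 2(⌈n/d⌉ − 1)(max{⌈t_{k₂}/s_1⌉, ⌈s_{k₁}/t_1⌉} + 1) + 2(s_1 + t_1)`, distinct
vertices `u, v` are adjacent in `C^m(D)` iff `u ≡ v (mod d)`. -/
theorem competition_index_bound (n k₁ k₂ : ℕ) (hn : 2 ≤ n)
    (s : Fin (k₁ + 1) → ℕ) (t : Fin (k₂ + 1) → ℕ)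
    (hs : StrictMono s) (ht : StrictMono t)
    (hsmem : ∀ i, s i ∈ Finset.Icc 1 (n - 1)) (htmem : ∀ j, t j ∈ Finset.Icc 1 (n - 1))
    (hST1 : s (Fin.last k₁) + t 0 ≤ n) (hST2 : s 0 + t (Fin.last k₂) ≤ n)
    (d : ℕ)
    (hd : d = Finset.univ.gcd (fun p : Fin (k₁ + 1) × Fin (k₂ + 1) => s p.1 + t p.2))
    (hconn : ∀ u ∈ Finset.Icc (1 : ℤ) (n : ℤ), ∀ v ∈ Finset.Icc (1 : ℤ) (n : ℤ),
      (d : ℤ) ∣ u - v →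
        Relation.ReflTransGen
          (fun x y => x ∈ Finset.Icc (1 : ℤ) (n : ℤ) ∧ y ∈ Finset.Icc (1 : ℤ) (n : ℤ) ∧
            (d : ℤ) ∣ x - u ∧ (d : ℤ) ∣ y - u ∧
            CompAdj n (Finset.image s Finset.univ) (Finset.image t Finset.univ) 1 x y)
          u v) :
    ∀ m : ℕ,
      2 * (n ⌈/⌉ d - 1) * (max (t (Fin.last k₂) ⌈/⌉ s 0) (s (Fin.last k₁) ⌈/⌉ t 0) + 1)
        + 2 * (s 0 + t 0) ≤ m →
      ∀ u ∈ Finset.Icc (1 : ℤ) (n : ℤ), ∀ v ∈ Finset.Icc (1 : ℤ) (n : ℤ), u ≠ v →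
        (CompAdj n (Finset.image s Finset.univ) (Finset.image t Finset.univ) m u v ↔
          (d : ℤ) ∣ u - v) := by
  classical
  intro m hm u hu v hv huv
  set S : Finset ℕ := Finset.image s Finset.univ with hSdef
  set T : Finset ℕ := Finset.image t Finset.univ with hTdef
  set M : ℕ := max (t (Fin.last k₂) ⌈/⌉ s 0) (s (Fin.last k₁) ⌈/⌉ t 0) with hMdef
  -- basic facts
  have hs0S : s 0 ∈ S := Finset.mem_image_of_mem s (Finset.mem_univ 0)
  have ht0T : t 0 ∈ T := Finset.mem_image_of_mem t (Finset.mem_univ 0)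
  have hs01 : 1 ≤ s 0 := (Finset.mem_Icc.1 (hsmem 0)).1
  have ht01 : 1 ≤ t 0 := (Finset.mem_Icc.1 (htmem 0)).1
  have hSmax : ∀ a ∈ S, a ≤ s (Fin.last k₁) := by
    intro a haS
    obtain ⟨i, -, rfl⟩ := Finset.mem_image.1 haS
    exact hs.monotone (Fin.le_last i)
  have hTmax : ∀ b ∈ T, b ≤ t (Fin.last k₂) := by
    intro b hbT
    obtain ⟨j, -, rfl⟩ := Finset.mem_image.1 hbT
    exact ht.monotone (Fin.le_last j)
  have hSn : ∀ a ∈ S, a + t 0 ≤ n := fun a haS =>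
    le_trans (Nat.add_le_add_right (hSmax a haS) _) hST1
  have hTn : ∀ b ∈ T, s 0 + b ≤ n := fun b hbT =>
    le_trans (Nat.add_le_add_left (hTmax b hbT) _) hST2
  have ht0max : t 0 ≤ t (Fin.last k₂) := ht.monotone (Fin.zero_le _)
  have hNn : s 0 + t 0 ≤ n := le_trans (Nat.add_le_add_left ht0max _) hST2
  have hdn : ∀ i j, d ∣ s i + t j := by
    intro i j
    rw [hd]
    exact Finset.gcd_dvd (Finset.mem_univ ((i, j) : Fin (k₁+1) × Fin (k₂+1)))
  have ddvd : ∀ i j, (d:ℤ) ∣ ((s i : ℤ) + t j) := by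
    intro i j
    exact_mod_cast Int.natCast_dvd_natCast.2 (hdn i j)
  have hdpos : 0 < d := by
    rcases Nat.eq_zero_or_pos d with h | h
    · exfalso
      have := hdn 0 0
      rw [h] at this
      have := Nat.eq_zero_of_zero_dvd this
      omega
    · exact h
  have hdN : d ≤ s 0 + t 0 := Nat.le_of_dvd (by omega) (hdn 0 0)
  have hM1 : ∀ b ∈ T, b ≤ M * s 0 := by
    intro b hbT
    have h1 : b ≤ t (Fin.last k₂) := hTmax b hbT
    have h2 : t (Fin.last k₂) ≤ s 0 * (t (Fin.last k₂) ⌈/⌉ s 0) := by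
      have := le_smul_ceilDiv (show 0 < s 0 by omega) (b := t (Fin.last k₂))
      simpa [smul_eq_mul] using this
    have h3 : s 0 * (t (Fin.last k₂) ⌈/⌉ s 0) ≤ s 0 * M :=
      Nat.mul_le_mul_left _ (le_max_left _ _)
    calc b ≤ s 0 * M := le_trans h1 (le_trans h2 h3)
      _ = M * s 0 := Nat.mul_comm _ _
  have hM2 : ∀ a ∈ S, a ≤ M * t 0 := by
    intro a haS
    have h1 : a ≤ s (Fin.last k₁) := hSmax a haS
    have h2 : s (Fin.last k₁) ≤ t 0 * (s (Fin.last k₁) ⌈/⌉ t 0) := by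
      have := le_smul_ceilDiv (show 0 < t 0 by omega) (b := s (Fin.last k₁))
      simpa [smul_eq_mul] using this
    have h3 : t 0 * (s (Fin.last k₁) ⌈/⌉ t 0) ≤ t 0 * M :=
      Nat.mul_le_mul_left _ (le_max_right _ _)
    calc a ≤ t 0 * M := le_trans h1 (le_trans h2 h3)
      _ = M * t 0 := Nat.mul_comm _ _
  obtain ⟨hu1, hun⟩ := Finset.mem_Icc.1 hu
  obtain ⟨hv1, hvn⟩ := Finset.mem_Icc.1 hv
  constructor
  · -- necessity
    rintro ⟨-, x, hwu, hwv⟩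
    have hstep : ∀ p q : ℤ, ToepArc n S T p q → (d:ℤ) ∣ q - p - s 0 := by
      rintro p q ⟨-, -, ⟨a, haS, rfl⟩ | ⟨b, hbT, rfl⟩⟩
      · obtain ⟨i, -, rfl⟩ := Finset.mem_image.1 haS
        have heq : p + (s i : ℤ) - p - s 0 = ((s i : ℤ) + t 0) - ((s 0 : ℤ) + t 0) := by ring
        rw [heq]
        exact dvd_sub (ddvd i 0) (ddvd 0 0)
      · obtain ⟨j, -, rfl⟩ := Finset.mem_image.1 hbT
        have heq : p - (t j : ℤ) - p - s 0 = -(((s 0 : ℤ)) + t j) := by ring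
        rw [heq]
        exact dvd_neg.2 (ddvd 0 j)
    have h1 := toep_walk_mod hstep hwu
    have h2 := toep_walk_mod hstep hwv
    have heq : u - v = (x - v - m * s 0) - (x - u - m * s 0) := by ring
    rw [heq]
    exact dvd_sub h2 h1
  · -- sufficiency
    intro hdvduv
    have hΔ : (d:ℤ) ∣ v - u := by
      have : v - u = -(u - v) := by ring
      rw [this]
      exact dvd_neg.2 hdvduv
    have hNz : (0:ℤ) < ((s 0 + t 0 : ℕ) : ℤ) := by
      have : 0 < s 0 + t 0 := by omega
      exact_mod_cast this
    -- Bezout certificate for d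
    obtain ⟨c, hc⟩ := toep_bezout (Finset.univ : Finset (Fin (k₁+1) × Fin (k₂+1)))
      (fun p => s p.1 + t p.2)
    have hcz : (d:ℤ) = ∑ p : Fin (k₁+1) × Fin (k₂+1),
        c p * ((s p.1 : ℤ) + (t p.2 : ℤ)) := by
      rw [hd]
      rw [hc]
      push_cast
      rfl
    -- a list of generators summing to `v - u` mod N
    have hgen1 : ∀ p : Fin (k₁+1) × Fin (k₂+1), p ∈ Finset.univ →
        ToepGen S T (t 0) ((s p.1 : ℤ) + (t 0 : ℤ)) := by
      intro p _
      exact Or.inl ⟨s p.1, Finset.mem_image_of_mem s (Finset.mem_univ p.1), rfl⟩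
    have hgen2 : ∀ p : Fin (k₁+1) × Fin (k₂+1), p ∈ Finset.univ →
        ToepGen S T (t 0) ((t 0 : ℤ) - (t p.2 : ℤ)) := by
      intro p _
      exact Or.inr ⟨t p.2, Finset.mem_image_of_mem t (Finset.mem_univ p.2), rfl⟩
    obtain ⟨L1, hL1g, hL1d⟩ := toep_listify (ToepGen S T (t 0)) Finset.univ
      (fun p => (s p.1 : ℤ) + (t 0 : ℤ)) (fun p => ((v - u) / d) * c p) hgen1 hNz
    obtain ⟨L2, hL2g, hL2d⟩ := toep_listify (ToepGen S T (t 0)) Finset.univ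
      (fun p => (t 0 : ℤ) - (t p.2 : ℤ)) (fun p => -(((v - u) / d) * c p)) hgen2 hNz
    have hsum12 : (∑ p : Fin (k₁+1) × Fin (k₂+1), ((v - u) / d) * c p * ((s p.1 : ℤ) + (t 0 : ℤ)))
        + (∑ p : Fin (k₁+1) × Fin (k₂+1), (-(((v - u) / d) * c p)) * ((t 0 : ℤ) - (t p.2 : ℤ)))
        = v - u := by
      rw [← Finset.sum_add_distrib]
      have heq : ∀ p : Fin (k₁+1) × Fin (k₂+1),
          ((v - u) / d) * c p * ((s p.1 : ℤ) + (t 0 : ℤ))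
          + (-(((v - u) / d) * c p)) * ((t 0 : ℤ) - (t p.2 : ℤ))
          = ((v - u) / d) * (c p * ((s p.1 : ℤ) + (t p.2 : ℤ))) := by
        intro p
        ring
      rw [Finset.sum_congr rfl (fun p _ => heq p), ← Finset.mul_sum, ← hcz]
      exact Int.ediv_mul_cancel hΔ
    have hLd : ((s 0 + t 0 : ℕ) : ℤ) ∣ (v - u) - (L1 ++ L2).sum := by
      rw [List.sum_append]
      have heq : (v - u) - (L1.sum + L2.sum)
          = ((∑ p : Fin (k₁+1) × Fin (k₂+1), ((v - u) / d) * c p * ((s p.1 : ℤ) + (t 0 : ℤ))) - L1.sum)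
          + ((∑ p : Fin (k₁+1) × Fin (k₂+1), (-(((v - u) / d) * c p)) * ((t 0 : ℤ) - (t p.2 : ℤ))) - L2.sum)
          - ((∑ p : Fin (k₁+1) × Fin (k₂+1), ((v - u) / d) * c p * ((s p.1 : ℤ) + (t 0 : ℤ)))
            + (∑ p : Fin (k₁+1) × Fin (k₂+1), (-(((v - u) / d) * c p)) * ((t 0 : ℤ) - (t p.2 : ℤ)))
            - (v - u)) := by ring
      rw [heq, hsum12]
      simp only [sub_self, sub_zero]
      exact dvd_add hL1d hL2d
    -- shorten the list
    have hPdvd : ∀ g, ToepGen S T (t 0) g → (d:ℤ) ∣ g := by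
      rintro g (⟨a, haS, rfl⟩ | ⟨b, hbT, rfl⟩)
      · obtain ⟨i, -, rfl⟩ := Finset.mem_image.1 haS
        exact ddvd i 0
      · obtain ⟨j, -, rfl⟩ := Finset.mem_image.1 hbT
        have heq : (t 0 : ℤ) - (t j : ℤ) = ((s 0 : ℤ) + t 0) - ((s 0 : ℤ) + t j) := by ring
        rw [heq]
        exact dvd_sub (ddvd 0 0) (ddvd 0 j)
    obtain ⟨L, hLg, hLdvd, hLlen⟩ := toep_shorten hdpos (hdn 0 0) (by omega)
      (ToepGen S T (t 0)) hPdvd (v - u)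
      ⟨L1 ++ L2, by
        intro g hg
        rcases List.mem_append.1 hg with h | h
        · exact hL1g g h
        · exact hL2g g h, hLd⟩
    -- walk the gadget chain from u
    obtain ⟨ku, qu, hku, hwu, hqu1, hqun, hqd⟩ :=
      toep_chain hs0S ht0T hs01 ht01 hSn hTn hM1 hM2 L hLg u hu1 hun
    -- numeric bookkeeping
    have hc0pos : 1 ≤ n ⌈/⌉ d := by
      rw [Nat.ceilDiv_eq_add_pred_div]
      exact (Nat.one_le_div_iff hdpos).2 (by omega)
    have hcd : n ≤ d * (n ⌈/⌉ d) := by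
      have := le_smul_ceilDiv hdpos (b := n)
      simpa [smul_eq_mul] using this
    obtain ⟨c1, hc1⟩ : ∃ c1, n ⌈/⌉ d = c1 + 1 := ⟨n ⌈/⌉ d - 1, by omega⟩
    have hlen2 : L.length ≤ c1 := by
      have h1 : (s 0 + t 0) / d ≤ n / d := Nat.div_le_div_right hNn
      have h2 : n / d ≤ n ⌈/⌉ d := by
        rw [Nat.ceilDiv_eq_add_pred_div]
        exact Nat.div_le_div_right (by omega)
      have h3 : (s 0 + t 0) / d ≤ n ⌈/⌉ d := le_trans h1 h2
      have h4 := le_trans hLlen (Nat.sub_le_sub_right h3 1)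
      omega
    have hkuc : ku ≤ c1 * (M + 1) := by
      calc ku ≤ L.length * (M+1) := hku
        _ ≤ c1 * (M+1) := Nat.mul_le_mul_right _ hlen2
    have hMt : s 0 + t 0 ≤ (M+1) * t 0 := by
      have h1 := hM2 (s 0) hs0S
      have h2 : (M+1) * t 0 = M * t 0 + t 0 := by ring
      omega
    have hMs : s 0 + t 0 ≤ (M+1) * s 0 := by
      have h1 := hM1 (t 0) ht0T
      have h2 : (M+1) * s 0 = M * s 0 + s 0 := by ring
      omega
    have hR0t : n ≤ (c1 * (M+1) + 2 * (s 0 + t 0)) * t 0 := by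
      have h1 : c1 * d ≤ c1 * ((M+1) * t 0) := Nat.mul_le_mul_left _ (le_trans hdN hMt)
      have h2 : d ≤ (s 0 + t 0) * t 0 := le_trans hdN (Nat.le_mul_of_pos_right _ (by omega))
      have h3 : (c1 * (M+1) + 2 * (s 0 + t 0)) * t 0
          = c1 * ((M+1) * t 0) + (s 0 + t 0) * t 0 + (s 0 + t 0) * t 0 := by ring
      have h4 : n ≤ c1 * d + d := by
        calc n ≤ d * (n ⌈/⌉ d) := hcd
          _ = c1 * d + d := by rw [hc1]; ring
      omega
    have hR0s : n ≤ (c1 * (M+1) + 2 * (s 0 + t 0)) * s 0 := by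
      have h1 : c1 * d ≤ c1 * ((M+1) * s 0) := Nat.mul_le_mul_left _ (le_trans hdN hMs)
      have h2 : d ≤ (s 0 + t 0) * s 0 := le_trans hdN (Nat.le_mul_of_pos_right _ (by omega))
      have h3 : (c1 * (M+1) + 2 * (s 0 + t 0)) * s 0
          = c1 * ((M+1) * s 0) + (s 0 + t 0) * s 0 + (s 0 + t 0) * s 0 := by ring
      have h4 : n ≤ c1 * d + d := by
        calc n ≤ d * (n ⌈/⌉ d) := hcd
          _ = c1 * d + d := by rw [hc1]; ring
      omega
    have hrw : n ⌈/⌉ d - 1 = c1 := by omega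
    rw [hrw] at hm
    have h2c : 2 * c1 * (M+1) = 2 * (c1 * (M+1)) := by ring
    have hkum : ku ≤ m := by omega
    set r : ℕ := m - ku with hrdef
    have hrR0 : c1 * (M+1) + 2 * (s 0 + t 0) ≤ r := by omega
    have hrm : ku + r = m := by omega
    have hrt : n ≤ r * t 0 := le_trans hR0t (Nat.mul_le_mul_right _ hrR0)
    have hrs : n ≤ r * s 0 := le_trans hR0s (Nat.mul_le_mul_right _ hrR0)
    have hmt : n ≤ m * t 0 := le_trans hrt (Nat.mul_le_mul_right _ (by omega))
    have hms : n ≤ m * s 0 := le_trans hrs (Nat.mul_le_mul_right _ (by omega))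
    -- pass to ℤ
    have hLdvd' : ((s 0:ℤ) + t 0) ∣ (v - u) - L.sum := by
      have : (((s 0 + t 0 : ℕ)):ℤ) = ((s 0:ℤ) + t 0) := by push_cast; ring
      rwa [this] at hLdvd
    have hNnz : ((s 0:ℤ) + t 0) ≤ (n:ℤ) := by exact_mod_cast hNn
    have hmtz : (n:ℤ) ≤ (m:ℤ) * t 0 := by exact_mod_cast hmt
    have hmsz : (n:ℤ) ≤ (m:ℤ) * s 0 := by exact_mod_cast hms
    have hrtz : (n:ℤ) ≤ (r:ℤ) * t 0 := by exact_mod_cast hrt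
    have hrsz : (n:ℤ) ≤ (r:ℤ) * s 0 := by exact_mod_cast hrs
    have hrcast : ((r:ℕ):ℤ) = (m:ℤ) - ku := by
      rw [hrdef]
      push_cast [Nat.cast_sub hkum]
      ring
    set Nz : ℤ := (s 0:ℤ) + t 0 with hNzdef
    have hNzpos : 0 < Nz := by
      have h1 : (1:ℤ) ≤ (s 0:ℤ) := by exact_mod_cast hs01
      have h2 : (1:ℤ) ≤ (t 0:ℤ) := by exact_mod_cast ht01
      rw [hNzdef]; linarith
    -- the common endpoint z
    set z : ℤ := (v - m * t 0 - 1) % Nz + 1 with hzdef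
    have hz1 : 1 ≤ z := by
      have := Int.emod_nonneg (v - m * t 0 - 1) hNzpos.ne'
      rw [hzdef]; linarith
    have hzN : z ≤ Nz := by
      have := Int.emod_lt_of_pos (v - m * t 0 - 1) hNzpos
      rw [hzdef]; linarith
    have hzn : z ≤ (n:ℤ) := le_trans hzN hNnz
    have hzd : Nz ∣ z - (v - m * t 0) := by
      have hh : z - (v - m * t 0) = -(Nz * ((v - m * t 0 - 1) / Nz)) := by
        rw [hzdef, Int.emod_def]
        ring
      rw [hh]
      exact dvd_neg.2 (dvd_mul_right Nz _)
    -- walk from v to z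
    have hαd : Nz ∣ z - v + (m:ℤ) * t 0 := by
      have heq : z - v + (m:ℤ) * t 0 = z - (v - m * t 0) := by ring
      rw [heq]; exact hzd
    obtain ⟨α, hα⟩ := hαd
    have hlow : (1:ℤ) ≤ z - v + (m:ℤ) * t 0 := by linarith
    have hα0 : 0 ≤ α := by
      by_contra hcon
      push_neg at hcon
      have h1 : α ≤ -1 := by omega
      have h2 : Nz * α ≤ Nz * (-1) := mul_le_mul_of_nonneg_left h1 (le_of_lt hNzpos)
      linarith
    have hNm : Nz * m = (m:ℤ) * s 0 + (m:ℤ) * t 0 := by rw [hNzdef]; ring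
    have hhigh : z - v + (m:ℤ) * t 0 ≤ Nz * m := by
      have : z - v ≤ Nz - 1 := by linarith
      linarith
    have hαm : α ≤ (m:ℤ) := by
      have : Nz * α ≤ Nz * m := by linarith
      exact le_of_mul_le_mul_left this hNzpos
    have havm : α.toNat ≤ m := by
      have h1 : ((α.toNat : ℕ):ℤ) = α := Int.toNat_of_nonneg hα0
      exact_mod_cast h1 ▸ hαm
    have hzeqv : z = v + ((α.toNat : ℕ):ℤ) * s 0 - ((m - α.toNat : ℕ):ℤ) * t 0 := by
      rw [Int.toNat_of_nonneg hα0, Nat.cast_sub havm, Int.toNat_of_nonneg hα0]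
      rw [hNzdef] at hα
      push_cast
      linear_combination hα
    have hwv : HasWalk n S T m v z :=
      toep_run hs0S ht0T hs01 ht01 hNn m α.toNat (m - α.toNat) v z (by omega)
        hv1 hvn hz1 hzn hzeqv
    -- walk from u to z through the gadget chain
    have hquv : Nz ∣ qu + (ku:ℤ) * t 0 - v := by
      have heq : qu + (ku:ℤ) * t 0 - v
          = (qu + (ku:ℤ) * t 0 - (u + L.sum)) - ((v - u) - L.sum) := by ring
      rw [heq]
      exact dvd_sub hqd hLdvd'
    have hβd : Nz ∣ z - qu + (r:ℤ) * t 0 := by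
      have heq : z - qu + (r:ℤ) * t 0
          = (z - (v - m * t 0)) - (qu + (ku:ℤ) * t 0 - v) := by
        rw [hrcast]; ring
      rw [heq]
      exact dvd_sub hzd hquv
    obtain ⟨β, hβ⟩ := hβd
    have hlow2 : (1:ℤ) ≤ z - qu + (r:ℤ) * t 0 := by linarith
    have hβ0 : 0 ≤ β := by
      by_contra hcon
      push_neg at hcon
      have h1 : β ≤ -1 := by omega
      have h2 : Nz * β ≤ Nz * (-1) := mul_le_mul_of_nonneg_left h1 (le_of_lt hNzpos)
      linarith
    have hNr : Nz * r = (r:ℤ) * s 0 + (r:ℤ) * t 0 := by rw [hNzdef]; ring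
    have hhigh2 : z - qu + (r:ℤ) * t 0 ≤ Nz * r := by
      have : z - qu ≤ Nz - 1 := by linarith
      linarith
    have hβr : β ≤ (r:ℤ) := by
      have : Nz * β ≤ Nz * r := by linarith
      exact le_of_mul_le_mul_left this hNzpos
    have haur : β.toNat ≤ r := by
      have h1 : ((β.toNat : ℕ):ℤ) = β := Int.toNat_of_nonneg hβ0
      exact_mod_cast h1 ▸ hβr
    have hzequ : z = qu + ((β.toNat : ℕ):ℤ) * s 0 - ((r - β.toNat : ℕ):ℤ) * t 0 := by
      rw [Int.toNat_of_nonneg hβ0, Nat.cast_sub haur, Int.toNat_of_nonneg hβ0]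
      rw [hNzdef] at hβ
      push_cast
      linear_combination hβ
    have hwu2 : HasWalk n S T r qu z :=
      toep_run hs0S ht0T hs01 ht01 hNn r β.toNat (r - β.toNat) qu z (by omega)
        hqu1 hqun hz1 hzn hzequ
    have hwalkU : HasWalk n S T m u z := by
      have := toep_hasWalk_trans hwu hwu2
      rwa [hrm] at this
    exact ⟨huv, z, hwalkU, hwv⟩
end

section
/- Let S = {s_1 < ⋯ < s_{k_1}} and T = {t_1 < ⋯ < t_{k_2}} be nonempty finite sets of positive integers and let d = gcd{s + t : s ∈ S, t ∈ T}. Then for every positive integer k there exist an integer r, a nonnegative integer f, and nonnegative integers a_{i,j} (1 ≤ i ≤ k_1, 1 ≤ j ≤ k) and b_{i,j} (1 ≤ i ≤ k_2, 1 ≤ j ≤ k) such that for every j ∈ {1, …, k}: r + j·d = Σ_{i=1}^{k_1} a_{i,j} s_i − Σ_{i=1}^{k_2} b_{i,j} t_i and Σ_{i=1}^{k_1} a_{i,j} + Σ_{i=1}^{k_2} b_{i,j} = f. -/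
lemma bezout_finset {ι : Type*} [DecidableEq ι] (s : Finset ι) (v : ι → ℕ) :
    ∃ c : ι → ℤ, ∑ i ∈ s, c i * (v i : ℤ) = ((s.gcd v : ℕ) : ℤ) := by
  classical
  induction s using Finset.induction_on with
  | empty => exact ⟨0, by simp⟩
  | @insert a s ha ih =>
    obtain ⟨c, hc⟩ := ih
    set A := Nat.gcdA (v a) (s.gcd v) with hA
    set B := Nat.gcdB (v a) (s.gcd v) with hB
    refine ⟨fun i => if i = a then A else B * c i, ?_⟩
    rw [Finset.sum_insert ha]
    simp only [if_pos rfl]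
    have h1 : ∑ i ∈ s, (if i = a then A else B * c i) * (v i : ℤ)
        = B * ∑ i ∈ s, c i * (v i : ℤ) := by
      rw [Finset.mul_sum]
      refine Finset.sum_congr rfl fun i hi => ?_
      rw [if_neg (by rintro rfl; exact ha hi)]; ring
    rw [h1, hc, Finset.gcd_insert]
    have h2 : ((gcd (v a) (s.gcd v) : ℕ) : ℤ) = ((Nat.gcd (v a) (s.gcd v) : ℕ) : ℤ) := rfl
    rw [h2, Nat.gcd_eq_gcd_ab, ← hA]
    simp only [if_pos trivial, if_true]
    ring

/-- For every positive integer `k` there exist an integer `r`, a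
constant `f`, and nonnegative integers `a_{i,j}`, `b_{i,j}` such that for every
`j ∈ {1, …, k}`: `r + j·d = Σ_i a_{i,j} s_i − Σ_i b_{i,j} t_i` with
`Σ_i a_{i,j} + Σ_i b_{i,j} = f`. -/
theorem consecutive_multiples_representation (k₁ k₂ : ℕ)
    (s : Fin (k₁ + 1) → ℕ) (t : Fin (k₂ + 1) → ℕ)
    (hs : StrictMono s) (ht : StrictMono t)
    (hspos : ∀ i, 0 < s i) (htpos : ∀ j, 0 < t j)
    (d : ℕ)
    (hd : d = Finset.univ.gcd (fun p : Fin (k₁ + 1) × Fin (k₂ + 1) => s p.1 + t p.2))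
    (k : ℕ) (hk : 0 < k) :
    ∃ r : ℤ, ∃ f : ℕ, ∃ a : Fin (k₁ + 1) → Fin k → ℕ, ∃ b : Fin (k₂ + 1) → Fin k → ℕ,
      ∀ j : Fin k,
        (r + ((j : ℕ) + 1 : ℤ) * (d : ℤ)
            = ∑ i, (a i j : ℤ) * (s i : ℤ) - ∑ i, (b i j : ℤ) * (t i : ℤ)) ∧
        (∑ i, a i j) + (∑ i, b i j) = f := by
  classical
  obtain ⟨c, hc⟩ := bezout_finset (Finset.univ : Finset (Fin (k₁ + 1) × Fin (k₂ + 1)))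
    (fun p => s p.1 + t p.2)
  rw [← hd] at hc
  set α : Fin (k₁ + 1) → ℤ := fun i => ∑ j', c (i, j') with hα
  set β : Fin (k₂ + 1) → ℤ := fun j' => ∑ i, c (i, j') with hβ
  -- key identity
  have hsum : ∑ i, α i * (s i : ℤ) + ∑ j', β j' * (t j' : ℤ) = (d : ℤ) := by
    rw [← hc, Fintype.sum_prod_type]
    push_cast
    have h1 : ∑ i, α i * (s i : ℤ) = ∑ i, ∑ j', c (i, j') * (s i : ℤ) := by
      refine Finset.sum_congr rfl fun i _ => ?_
      rw [hα, Finset.sum_mul]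
    have h2 : ∑ j', β j' * (t j' : ℤ) = ∑ i, ∑ j', c (i, j') * (t j' : ℤ) := by
      rw [Finset.sum_comm]
      refine Finset.sum_congr rfl fun j' _ => ?_
      rw [hβ, Finset.sum_mul]
    rw [h1, h2, ← Finset.sum_add_distrib]
    refine Finset.sum_congr rfl fun i _ => ?_
    rw [← Finset.sum_add_distrib]
    refine Finset.sum_congr rfl fun j' _ => ?_
    ring
  have hαβ : ∑ i, α i = ∑ j', β j' := by
    simp only [hα, hβ]
    exact Finset.sum_comm
  -- big integer coefficients
  set A : Fin (k₁ + 1) → Fin k → ℤ :=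
    fun i j => ((j : ℕ) + 1 : ℤ) * α i + (k : ℤ) * (α i).natAbs with hAdef
  set B : Fin (k₂ + 1) → Fin k → ℤ :=
    fun j' j => -(((j : ℕ) + 1 : ℤ)) * β j' + (k : ℤ) * (β j').natAbs with hBdef
  have habs : ∀ (x : ℤ) (j : Fin k), 0 ≤ ((j : ℕ) + 1 : ℤ) * x + (k : ℤ) * x.natAbs ∧
      0 ≤ -(((j : ℕ) + 1 : ℤ)) * x + (k : ℤ) * x.natAbs := by
    intro x j
    have hj : ((j : ℕ) + 1 : ℤ) ≤ (k : ℤ) := by exact_mod_cast j.isLt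
    have hj0 : (0 : ℤ) ≤ ((j : ℕ) + 1 : ℤ) := by positivity
    have hx : |x| = (x.natAbs : ℤ) := Int.abs_eq_natAbs x
    have h1 : |((j : ℕ) + 1 : ℤ) * x| ≤ (k : ℤ) * (x.natAbs : ℤ) := by
      rw [abs_mul, ← hx, abs_of_nonneg hj0]
      exact mul_le_mul_of_nonneg_right hj (abs_nonneg x)
    constructor
    · nlinarith [neg_abs_le (((j : ℕ) + 1 : ℤ) * x), le_abs_self (((j : ℕ) + 1 : ℤ) * x)]
    · nlinarith [neg_abs_le (((j : ℕ) + 1 : ℤ) * x), le_abs_self (((j : ℕ) + 1 : ℤ) * x)]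
  have hA0 : ∀ i j, 0 ≤ A i j := fun i j => (habs (α i) j).1
  have hB0 : ∀ j' j, 0 ≤ B j' j := fun j' j => (habs (β j') j).2
  refine ⟨∑ i, ((k : ℤ) * (α i).natAbs) * (s i : ℤ)
      - ∑ j', ((k : ℤ) * (β j').natAbs) * (t j' : ℤ),
    (∑ i, k * (α i).natAbs) + (∑ j', k * (β j').natAbs),
    fun i j => (A i j).toNat, fun j' j => (B j' j).toNat, fun j => ⟨?_, ?_⟩⟩
  · have e1 : ∑ i, (((A i j).toNat : ℤ)) * (s i : ℤ)
        = ((j : ℕ) + 1 : ℤ) * (∑ i, α i * (s i : ℤ))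
          + ∑ i, ((k : ℤ) * (α i).natAbs) * (s i : ℤ) := by
      rw [Finset.mul_sum, ← Finset.sum_add_distrib]
      refine Finset.sum_congr rfl fun i _ => ?_
      rw [Int.toNat_of_nonneg (hA0 i j), hAdef]
      ring
    have e2 : ∑ j', (((B j' j).toNat : ℤ)) * (t j' : ℤ)
        = -(((j : ℕ) + 1 : ℤ)) * (∑ j', β j' * (t j' : ℤ))
          + ∑ j', ((k : ℤ) * (β j').natAbs) * (t j' : ℤ) := by
      rw [Finset.mul_sum, ← Finset.sum_add_distrib]
      refine Finset.sum_congr rfl fun j' _ => ?_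
      rw [Int.toNat_of_nonneg (hB0 j' j), hBdef]
      ring
    rw [e1, e2]
    linear_combination (-(((j : ℕ) : ℤ) + 1)) * hsum
  · have hz : (((∑ i, (A i j).toNat) + (∑ j', (B j' j).toNat) : ℕ) : ℤ)
        = (((∑ i, k * (α i).natAbs) + (∑ j', k * (β j').natAbs) : ℕ) : ℤ) := by
      push_cast
      have f1 : ∑ i, (((A i j).toNat : ℤ))
          = ((j : ℕ) + 1 : ℤ) * (∑ i, α i) + ∑ i, (k : ℤ) * ((α i).natAbs : ℤ) := by
        rw [Finset.mul_sum, ← Finset.sum_add_distrib]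
        refine Finset.sum_congr rfl fun i _ => ?_
        rw [Int.toNat_of_nonneg (hA0 i j), hAdef]
      have f2 : ∑ j', (((B j' j).toNat : ℤ))
          = -(((j : ℕ) + 1 : ℤ)) * (∑ j', β j') + ∑ j', (k : ℤ) * ((β j').natAbs : ℤ) := by
        rw [Finset.mul_sum, ← Finset.sum_add_distrib]
        refine Finset.sum_congr rfl fun j' _ => ?_
        rw [Int.toNat_of_nonneg (hB0 j' j), hBdef]
      rw [f1, f2]
      simp only [Int.abs_eq_natAbs]
      linear_combination (((j : ℕ) : ℤ) + 1) * hαβ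
    exact_mod_cast hz
end

section
/- Let S = {s_1 < ⋯ < s_{k_1}} and T = {t_1 < ⋯ < t_{k_2}} be nonempty subsets of {1, …, n−1} and let d = gcd{s + t : s ∈ S, t ∈ T}. Then there exists a positive integer m such that every integer ℓ with −(n−1) ≤ ℓ ≤ n−1 and ℓ ≡ m·s_1 (mod d) can be written as ℓ = Σ_{j=1}^{k_1} a_j s_j − Σ_{j=1}^{k_2} b_j t_j for some nonnegative integers a_1, …, a_{k_1}, b_1, …, b_{k_2} with Σ_j a_j + Σ_j b_j = m. (That is, there exists a positive integer m with P_m ⊆ Q_m.) -/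
lemma finset_gcd_bezout {ι : Type*} [DecidableEq ι] (u : Finset ι) (f : ι → ℕ) :
    ∃ c : ι → ℤ, ∑ i ∈ u, c i * (f i : ℤ) = ((u.gcd f : ℕ) : ℤ) := by
  classical
  induction u using Finset.induction with
  | empty => exact ⟨0, by simp⟩
  | @insert a u ha ih =>
    obtain ⟨c, hc⟩ := ih
    refine ⟨fun i => if i = a then Nat.gcdA (f a) (u.gcd f)
      else Nat.gcdB (f a) (u.gcd f) * c i, ?_⟩
    rw [Finset.sum_insert ha, Finset.gcd_insert]
    have h1 : ∑ i ∈ u, (if i = a then Nat.gcdA (f a) (u.gcd f)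
        else Nat.gcdB (f a) (u.gcd f) * c i) * (f i : ℤ)
        = Nat.gcdB (f a) (u.gcd f) * ∑ i ∈ u, c i * (f i : ℤ) := by
      rw [Finset.mul_sum]
      refine Finset.sum_congr rfl fun i hi => ?_
      rw [if_neg (by rintro rfl; exact ha hi)]
      ring
    rw [h1, hc]
    beta_reduce
    rw [if_pos rfl]
    have h2 := Nat.gcd_eq_gcd_ab (f a) (u.gcd f)
    have h3 : GCDMonoid.gcd (f a) (u.gcd f) = Nat.gcd (f a) (u.gcd f) := rfl
    rw [h3]
    push_cast [h2]
    ring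

set_option maxHeartbeats 1000000

/-- There exists a positive integer `m` such that `P_m ⊆ Q_m`:
every `ℓ ∈ [−(n−1), n−1]` with `ℓ ≡ m·s_1 (mod d)` can be written as
`ℓ = Σ a_j s_j − Σ b_j t_j` with nonnegative `a_j, b_j` and `Σ a_j + Σ b_j = m`. -/
theorem exists_P_subset_Q (n k₁ k₂ : ℕ) (hn : 2 ≤ n)
    (s : Fin (k₁ + 1) → ℕ) (t : Fin (k₂ + 1) → ℕ)
    (hs : StrictMono s) (ht : StrictMono t)
    (hsmem : ∀ i, s i ∈ Finset.Icc 1 (n - 1)) (htmem : ∀ j, t j ∈ Finset.Icc 1 (n - 1))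
    (d : ℕ)
    (hd : d = Finset.univ.gcd (fun p : Fin (k₁ + 1) × Fin (k₂ + 1) => s p.1 + t p.2)) :
    ∃ m : ℕ, 0 < m ∧ ∀ ℓ : ℤ, -((n : ℤ) - 1) ≤ ℓ → ℓ ≤ (n : ℤ) - 1 →
      (d : ℤ) ∣ ℓ - (m : ℤ) * (s 0 : ℤ) →
      ∃ a : Fin (k₁ + 1) → ℕ, ∃ b : Fin (k₂ + 1) → ℕ,
        (∑ j, a j) + (∑ j, b j) = m ∧
        ℓ = ∑ j, (a j : ℤ) * (s j : ℤ) - ∑ j, (b j : ℤ) * (t j : ℤ) := by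
  classical
  have hs1 : ∀ i, 1 ≤ s i := fun i => (Finset.mem_Icc.mp (hsmem i)).1
  have ht1 : ∀ j, 1 ≤ t j := fun j => (Finset.mem_Icc.mp (htmem j)).1
  have hd_dvd : ∀ (i : Fin (k₁+1)) (j : Fin (k₂+1)), d ∣ s i + t j := by
    intro i j
    rw [hd]
    exact Finset.gcd_dvd (Finset.mem_univ (i, j))
  have hd0 : 0 < d := by
    rcases Nat.eq_zero_or_pos d with h | h
    · exfalso
      have h1 := hd_dvd 0 0
      rw [h] at h1
      have h2 := Nat.eq_zero_of_zero_dvd h1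
      have := hs1 0
      omega
    · exact h
  obtain ⟨c, hc⟩ := finset_gcd_bezout Finset.univ
    (fun p : Fin (k₁+1) × Fin (k₂+1) => s p.1 + t p.2)
  rw [← hd] at hc
  obtain ⟨A, hA⟩ : ∃ A : Fin (k₁+1) → ℤ, A = fun i => ∑ j, c (i, j) := ⟨_, rfl⟩
  obtain ⟨B, hB⟩ : ∃ B : Fin (k₂+1) → ℤ, B = fun j => -∑ i, c (i, j) := ⟨_, rfl⟩
  have hAB : (∑ i, A i) + (∑ j, B j) = 0 := by
    simp only [hA, hB, Finset.sum_neg_distrib]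
    rw [Finset.sum_comm]
    ring
  have hval : (∑ i, A i * (s i : ℤ)) - (∑ j, B j * (t j : ℤ)) = (d : ℤ) := by
    have e1 : ∑ i, A i * (s i : ℤ) = ∑ p : Fin (k₁+1) × Fin (k₂+1), c p * (s p.1 : ℤ) := by
      rw [Fintype.sum_prod_type]
      refine Finset.sum_congr rfl fun i _ => ?_
      simp only [hA]
      rw [Finset.sum_mul]
    have e2 : ∑ j, B j * (t j : ℤ) = -∑ p : Fin (k₁+1) × Fin (k₂+1), c p * (t p.2 : ℤ) := by
      simp only [hB, neg_mul, Finset.sum_neg_distrib]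
      congr 1
      rw [Fintype.sum_prod_type, Finset.sum_comm]
      refine Finset.sum_congr rfl fun j _ => ?_
      rw [Finset.sum_mul]
    rw [e1, e2, sub_neg_eq_add, ← Finset.sum_add_distrib, ← hc]
    refine Finset.sum_congr rfl fun p _ => ?_
    push_cast
    ring
  obtain ⟨Z, hZ⟩ : ∃ Z : ℕ, Z = 1 + (∑ i, (A i).natAbs) + (∑ j, (B j).natAbs) := ⟨_, rfl⟩
  obtain ⟨W, hW⟩ : ∃ W : ℕ, W = n * Z := ⟨_, rfl⟩
  obtain ⟨m, hm⟩ : ∃ m : ℕ, m = W * ((∑ j, (s 0 + t j)) + (∑ i, (s i + t 0))) := ⟨_, rfl⟩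
  have hW0 : 0 < W := by
    rw [hW, hZ]
    have : 0 < n := by omega
    positivity
  refine ⟨m, ?_, ?_⟩
  · have h1 : 0 < ∑ j, (s 0 + t j) :=
      Finset.sum_pos (fun j _ => by have := hs1 0; have := ht1 j; omega) Finset.univ_nonempty
    rw [hm]
    exact Nat.mul_pos hW0 (Nat.add_pos_left h1 _)
  intro ℓ hl1 hl2 hdvd
  have hdm : (d : ℤ) ∣ (m : ℤ) * (s 0 : ℤ) := by
    have h1 : d ∣ ∑ j, (s 0 + t j) * s 0 :=
      Finset.dvd_sum fun j _ => Dvd.dvd.mul_right (hd_dvd 0 j) _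
    have h2 : d ∣ ∑ i, (s i + t 0) * s 0 :=
      Finset.dvd_sum fun i _ => Dvd.dvd.mul_right (hd_dvd i 0) _
    have h3 : m * s 0 = W * ((∑ j, (s 0 + t j)) * s 0 + (∑ i, (s i + t 0)) * s 0) := by
      rw [hm]; ring
    have h4 : d ∣ m * s 0 := by
      rw [h3, Finset.sum_mul, Finset.sum_mul]
      exact Dvd.dvd.mul_left (dvd_add h1 h2) W
    exact_mod_cast h4
  have hdl : (d : ℤ) ∣ ℓ := by
    have := dvd_add hdvd hdm
    simpa using this
  obtain ⟨q, hq⟩ := hdl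
  have hqabs : |q| ≤ (n : ℤ) - 1 := by
    have h1 : |ℓ| ≤ (n : ℤ) - 1 := abs_le.mpr ⟨by linarith, hl2⟩
    have h2 : |q| * 1 ≤ |q| * (d : ℤ) := by
      apply mul_le_mul_of_nonneg_left _ (abs_nonneg q)
      exact_mod_cast hd0
    have h3 : |q| * (d : ℤ) = |ℓ| := by
      rw [hq, abs_mul, abs_of_nonneg (by positivity : (0:ℤ) ≤ (d:ℤ))]; ring
    linarith
  have hZn : ∀ i : Fin (k₁+1), |A i| ≤ (Z : ℤ) := by
    intro i
    have h2 : (A i).natAbs ≤ ∑ i, (A i).natAbs :=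
      Finset.single_le_sum (f := fun i => (A i).natAbs)
        (fun _ _ => Nat.zero_le _) (Finset.mem_univ i)
    have h1 : (A i).natAbs ≤ Z := by omega
    calc |A i| = ((A i).natAbs : ℤ) := Int.abs_eq_natAbs _
    _ ≤ (Z : ℤ) := by exact_mod_cast h1
  have hZnB : ∀ j : Fin (k₂+1), |B j| ≤ (Z : ℤ) := by
    intro j
    have h2 : (B j).natAbs ≤ ∑ j, (B j).natAbs :=
      Finset.single_le_sum (f := fun j => (B j).natAbs)
        (fun _ _ => Nat.zero_le _) (Finset.mem_univ j)
    have h1 : (B j).natAbs ≤ Z := by omega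
    calc |B j| = ((B j).natAbs : ℤ) := Int.abs_eq_natAbs _
    _ ≤ (Z : ℤ) := by exact_mod_cast h1
  have hn1 : (1:ℤ) ≤ (n:ℤ) := by exact_mod_cast Nat.one_le_of_lt hn
  have hZ0 : (0:ℤ) ≤ (Z:ℤ) := by positivity
  have hqA : ∀ i, -(W : ℤ) ≤ q * A i := by
    intro i
    have h1 : |q * A i| ≤ (W : ℤ) := by
      rw [abs_mul, hW]
      push_cast
      have h3 := hZn i
      have h4 := abs_nonneg q
      have h5 := abs_nonneg (A i)
      nlinarith [hqabs]
    linarith [neg_abs_le (q * A i)]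
  have hqB : ∀ j, -(W : ℤ) ≤ q * B j := by
    intro j
    have h1 : |q * B j| ≤ (W : ℤ) := by
      rw [abs_mul, hW]
      push_cast
      have h3 := hZnB j
      have h4 := abs_nonneg q
      have h5 := abs_nonneg (B j)
      nlinarith [hqabs]
    linarith [neg_abs_le (q * B j)]
  obtain ⟨α, hα⟩ : ∃ α : Fin (k₁+1) → ℤ, α = fun i =>
    (W : ℤ) * (t 0 : ℤ) + (if i = 0 then (W : ℤ) * ∑ j, (t j : ℤ) else 0) := ⟨_, rfl⟩
  obtain ⟨β, hβ⟩ : ∃ β : Fin (k₂+1) → ℤ, β = fun j =>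
    (W : ℤ) * (s 0 : ℤ) + (if j = 0 then (W : ℤ) * ∑ i, (s i : ℤ) else 0) := ⟨_, rfl⟩
  have hαnn : ∀ i, 0 ≤ α i + q * A i := by
    intro i
    have h1 : (W : ℤ) * 1 ≤ (W : ℤ) * (t 0 : ℤ) := by
      apply mul_le_mul_of_nonneg_left _ (by positivity)
      exact_mod_cast ht1 0
    have h2 : (0:ℤ) ≤ (if i = 0 then (W : ℤ) * ∑ j, (t j : ℤ) else 0) := by
      split
      · positivity
      · exact le_rfl
    have h3 := hqA i
    simp only [hα]
    linarith
  have hβnn : ∀ j, 0 ≤ β j + q * B j := by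
    intro j
    have h1 : (W : ℤ) * 1 ≤ (W : ℤ) * (s 0 : ℤ) := by
      apply mul_le_mul_of_nonneg_left _ (by positivity)
      exact_mod_cast hs1 0
    have h2 : (0:ℤ) ≤ (if j = 0 then (W : ℤ) * ∑ i, (s i : ℤ) else 0) := by
      split
      · positivity
      · exact le_rfl
    have h3 := hqB j
    simp only [hβ]
    linarith
  have hcast : ∀ i, (((α i + q * A i).toNat : ℕ) : ℤ) = α i + q * A i :=
    fun i => Int.toNat_of_nonneg (hαnn i)
  have hcast' : ∀ j, (((β j + q * B j).toNat : ℕ) : ℤ) = β j + q * B j :=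
    fun j => Int.toNat_of_nonneg (hβnn j)
  have hsumα : ∑ i, α i = (W:ℤ) * (t 0:ℤ) * (k₁+1) + (W:ℤ) * ∑ j, (t j:ℤ) := by
    simp only [hα]
    rw [Finset.sum_add_distrib, Finset.sum_const, Finset.sum_ite_eq' Finset.univ (0 : Fin (k₁+1))]
    simp [Fintype.card_fin]
    ring
  have hsumβ : ∑ j, β j = (W:ℤ) * (s 0:ℤ) * (k₂+1) + (W:ℤ) * ∑ i, (s i:ℤ) := by
    simp only [hβ]
    rw [Finset.sum_add_distrib, Finset.sum_const, Finset.sum_ite_eq' Finset.univ (0 : Fin (k₂+1))]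
    simp [Fintype.card_fin]
    ring
  have hmZ : (m : ℤ) = (W:ℤ) * (((k₂:ℤ)+1) * (s 0:ℤ) + ∑ j, (t j:ℤ)
      + (∑ i, (s i:ℤ)) + ((k₁:ℤ)+1) * (t 0:ℤ)) := by
    rw [hm]
    push_cast
    rw [Finset.sum_add_distrib, Finset.sum_add_distrib, Finset.sum_const, Finset.sum_const,
      Finset.card_univ, Finset.card_univ, Fintype.card_fin, Fintype.card_fin,
      nsmul_eq_mul, nsmul_eq_mul]
    push_cast
    ring
  refine ⟨fun i => (α i + q * A i).toNat, fun j => (β j + q * B j).toNat, ?_, ?_⟩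
  · -- sum condition
    have key : (((∑ i, (α i + q * A i).toNat) + ∑ j, (β j + q * B j).toNat : ℕ) : ℤ)
        = (m : ℤ) := by
      rw [Nat.cast_add, Nat.cast_sum, Nat.cast_sum]
      rw [Finset.sum_congr rfl (fun i _ => hcast i), Finset.sum_congr rfl (fun j _ => hcast' j)]
      rw [Finset.sum_add_distrib, Finset.sum_add_distrib, ← Finset.mul_sum, ← Finset.mul_sum]
      rw [hsumα, hsumβ, hmZ]
      have : q * (∑ i, A i) + q * (∑ j, B j) = 0 := by
        rw [← mul_add, hAB, mul_zero]
      linarith [this]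
    exact_mod_cast key
  · -- value condition
    have e1 : ∀ i : Fin (k₁+1), (((α i + q * A i).toNat : ℕ) : ℤ) * (s i : ℤ)
        = α i * (s i:ℤ) + q * (A i * (s i:ℤ)) := by
      intro i; rw [hcast i]; ring
    have e2 : ∀ j : Fin (k₂+1), (((β j + q * B j).toNat : ℕ) : ℤ) * (t j : ℤ)
        = β j * (t j:ℤ) + q * (B j * (t j:ℤ)) := by
      intro j; rw [hcast' j]; ring
    rw [Finset.sum_congr rfl (fun i _ => e1 i), Finset.sum_congr rfl (fun j _ => e2 j)]
    rw [Finset.sum_add_distrib, Finset.sum_add_distrib, ← Finset.mul_sum, ← Finset.mul_sum]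
    have hbase : (∑ i, α i * (s i:ℤ)) - (∑ j, β j * (t j:ℤ)) = 0 := by
      simp only [hα, hβ, add_mul, ite_mul, zero_mul]
      rw [Finset.sum_add_distrib, Finset.sum_add_distrib,
        Finset.sum_ite_eq' Finset.univ (0 : Fin (k₁+1)),
        Finset.sum_ite_eq' Finset.univ (0 : Fin (k₂+1))]
      simp only [Finset.mem_univ, if_pos, ← Finset.mul_sum]
      ring
    have : q * (∑ i, A i * (s i:ℤ)) - q * (∑ j, B j * (t j:ℤ)) = (d:ℤ) * q := by
      rw [← mul_sub, hval]; ring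
    linarith [hbase, this, hq.symm]
end
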